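/- arXiv:2204.12570 — 4 statements merged into one kernel-verified Lean document; each statement's English description precedes it below -/
import Mathlib

section
/- Let f ∈ L¹([0,1]) and F(x) = ∫₀ˣ f(t) dt. Define P_n(f,x) = d/dx B_{n+1}(F,x) = Σ_{k=0}^n C(n,k) x^k (1-x)^{n-k} (n+1) ∫_{k/(n+1)}^{(k+1)/(n+1)} f(t) dt. Then at every Lebesgue point x ∈ (0,1) of f (i.e. every point where F'(x) = f(x)), P_n(f,x) → f(x) as n → ∞. -/
open MeasureTheory Filter Set intervalIntegral

/-- The Lorentz modification of the Bernstein polynomials (the derivative of the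
`(n+1)`-st Bernstein polynomial of the indefinite integral of `f`). -/
noncomputable def lorentzP (f : ℝ → ℝ) (n : ℕ) (x : ℝ) : ℝ :=
  ∑ k ∈ Finset.range (n + 1),
    (n.choose k : ℝ) * x ^ k * (1 - x) ^ (n - k) * ((n : ℝ) + 1) *
      ∫ t in ((k : ℝ) / (n + 1))..(((k : ℝ) + 1) / (n + 1)), f t

private lemma castD2 (k : ℕ) : ((k.descFactorial 2 : ℕ) : ℝ) = (k:ℝ) * ((k:ℝ) - 1) := by
  cases k with
  | zero => simp
  | succ n => rw [Nat.succ_descFactorial_succ, Nat.cast_mul, Nat.descFactorial_one]; push_cast; ring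

private lemma castD3 (k : ℕ) : ((k.descFactorial 3 : ℕ) : ℝ)
    = (k:ℝ) * ((k:ℝ) - 1) * ((k:ℝ) - 2) := by
  cases k with
  | zero => simp
  | succ n => rw [Nat.succ_descFactorial_succ, Nat.cast_mul, castD2]; push_cast; ring

private lemma castD4 (k : ℕ) : ((k.descFactorial 4 : ℕ) : ℝ)
    = (k:ℝ) * ((k:ℝ) - 1) * ((k:ℝ) - 2) * ((k:ℝ) - 3) := by
  cases k with
  | zero => simp
  | succ n => rw [Nat.succ_descFactorial_succ, Nat.cast_mul, castD3]; push_cast; ring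

private lemma descChoose {m j i : ℕ} (h : j + i ≤ m) :
    (j + i).descFactorial j * m.choose (j + i) = m.descFactorial j * (m - j).choose i := by
  have h1 := Nat.choose_mul (n := m) (k := j + i) (s := j) (Nat.le_add_right j i)
  rw [Nat.add_sub_cancel_left] at h1
  rw [Nat.descFactorial_eq_factorial_mul_choose, Nat.descFactorial_eq_factorial_mul_choose,
    mul_assoc, mul_assoc, mul_comm ((j+i).choose j), h1]

private lemma descSum (m j : ℕ) (x q : ℝ) :
    ∑ k ∈ Finset.range (m+1), (k.descFactorial j : ℝ) * (m.choose k : ℝ) * x^k * q^(m-k)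
      = (m.descFactorial j : ℝ) * x^j * (x+q)^(m-j) := by
  rcases le_or_gt j m with hj | hj
  · rw [Finset.range_eq_Ico, ← Finset.sum_Ico_consecutive _ (Nat.zero_le j) (by omega : j ≤ m+1)]
    have hz : ∑ k ∈ Finset.Ico 0 j, (k.descFactorial j : ℝ) * (m.choose k : ℝ) * x^k * q^(m-k) = 0 := by
      apply Finset.sum_eq_zero
      intro k hk
      simp only [Finset.mem_Ico] at hk
      rw [Nat.descFactorial_eq_zero_iff_lt.2 hk.2]
      simp
    rw [hz, zero_add, Finset.sum_Ico_eq_sum_range]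
    have hm : m + 1 - j = (m - j) + 1 := by omega
    rw [hm]
    have step : ∀ i ∈ Finset.range ((m-j)+1),
        ((j + i).descFactorial j : ℝ) * (m.choose (j + i) : ℝ) * x^(j+i) * q^(m-(j+i))
          = (m.descFactorial j : ℝ) * x^j * ((x^i * q^((m-j)-i)) * ((m-j).choose i : ℝ)) := by
      intro i hi
      simp only [Finset.mem_range] at hi
      have hji : j + i ≤ m := by omega
      have := descChoose (m := m) (j := j) (i := i) hji
      have hc : ((j + i).descFactorial j : ℝ) * (m.choose (j + i) : ℝ)
          = (m.descFactorial j : ℝ) * ((m - j).choose i : ℝ) := by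
        exact_mod_cast congrArg (fun t : ℕ => (t : ℝ)) this
      have he : m - (j + i) = (m - j) - i := by omega
      rw [hc, he, pow_add]
      ring
    rw [Finset.sum_congr rfl step, ← Finset.mul_sum, ← add_pow]
  · have hz : ∀ k ∈ Finset.range (m+1),
        (k.descFactorial j : ℝ) * (m.choose k : ℝ) * x^k * q^(m-k) = 0 := by
      intro k hk
      simp only [Finset.mem_range] at hk
      rw [Nat.descFactorial_eq_zero_iff_lt.2 (by omega)]
      simp
    rw [Finset.sum_eq_zero hz, Nat.descFactorial_eq_zero_iff_lt.2 hj]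
    simp

private lemma momentD (m j : ℕ) (x : ℝ) :
    ∑ k ∈ Finset.range (m+1), (m.choose k : ℝ) * x^k * (1-x)^(m-k) * (k.descFactorial j : ℝ)
      = (m.descFactorial j : ℝ) * x^j := by
  have h := descSum m j x (1-x)
  have h1 : x + (1-x) = 1 := by ring
  rw [h1, one_pow, mul_one] at h
  rw [← h]
  exact Finset.sum_congr rfl (fun k _ => by ring)

private lemma moment0 (m : ℕ) (x : ℝ) :
    ∑ k ∈ Finset.range (m+1), (m.choose k : ℝ) * x^k * (1-x)^(m-k) = 1 := by
  have h := momentD m 0 x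
  simp only [Nat.descFactorial_zero, Nat.cast_one, mul_one, pow_zero, one_mul] at h
  exact h

private lemma moment1 (m : ℕ) (x : ℝ) :
    ∑ k ∈ Finset.range (m+1), (m.choose k : ℝ) * x^k * (1-x)^(m-k) * (k:ℝ) = (m:ℝ) * x := by
  have h := momentD m 1 x
  simp only [Nat.descFactorial_one, pow_one] at h
  exact h

private lemma moment2 (m : ℕ) (x : ℝ) :
    ∑ k ∈ Finset.range (m+1),
      (m.choose k : ℝ) * x^k * (1-x)^(m-k) * ((k:ℝ) - (m:ℝ)*x)^2 = (m:ℝ)*x*(1-x) := by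
  have key : ∀ k ∈ Finset.range (m+1),
      (m.choose k:ℝ)*x^k*(1-x)^(m-k) * ((k:ℝ) - (m:ℝ)*x)^2
      = ((m.choose k:ℝ)*x^k*(1-x)^(m-k) * ((k.descFactorial 2 : ℕ):ℝ))
        + ((1-2*((m:ℝ)*x)) * ((m.choose k:ℝ)*x^k*(1-x)^(m-k) * ((k.descFactorial 1 : ℕ):ℝ))
        + ((m:ℝ)*x)^2 * ((m.choose k:ℝ)*x^k*(1-x)^(m-k) * ((k.descFactorial 0 : ℕ):ℝ))) := by
    intro k _
    rw [castD2, Nat.descFactorial_one, Nat.descFactorial_zero]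
    push_cast
    ring
  rw [Finset.sum_congr rfl key, Finset.sum_add_distrib, Finset.sum_add_distrib,
    ← Finset.mul_sum, ← Finset.mul_sum, momentD, momentD, momentD,
    castD2 m, Nat.descFactorial_one, Nat.descFactorial_zero]
  push_cast
  ring

private lemma moment4 (m : ℕ) (x : ℝ) :
    ∑ k ∈ Finset.range (m+1),
      (m.choose k : ℝ) * x^k * (1-x)^(m-k) * ((k:ℝ) - (m:ℝ)*x)^4
      = (m:ℝ)*x*(1-x)*(1+3*((m:ℝ)-2)*x*(1-x)) := by
  have key : ∀ k ∈ Finset.range (m+1),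
      (m.choose k:ℝ)*x^k*(1-x)^(m-k) * ((k:ℝ) - (m:ℝ)*x)^4
      = ((m.choose k:ℝ)*x^k*(1-x)^(m-k) * ((k.descFactorial 4 : ℕ):ℝ))
        + ((6-4*((m:ℝ)*x)) * ((m.choose k:ℝ)*x^k*(1-x)^(m-k) * ((k.descFactorial 3 : ℕ):ℝ))
        + ((7-12*((m:ℝ)*x)+6*((m:ℝ)*x)^2) * ((m.choose k:ℝ)*x^k*(1-x)^(m-k) * ((k.descFactorial 2 : ℕ):ℝ))
        + ((1-4*((m:ℝ)*x)+6*((m:ℝ)*x)^2-4*((m:ℝ)*x)^3) * ((m.choose k:ℝ)*x^k*(1-x)^(m-k) * ((k.descFactorial 1 : ℕ):ℝ))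
        + ((m:ℝ)*x)^4 * ((m.choose k:ℝ)*x^k*(1-x)^(m-k) * ((k.descFactorial 0 : ℕ):ℝ))))) := by
    intro k _
    rw [castD4, castD3, castD2, Nat.descFactorial_one, Nat.descFactorial_zero]
    push_cast
    ring
  rw [Finset.sum_congr rfl key, Finset.sum_add_distrib, Finset.sum_add_distrib,
    Finset.sum_add_distrib, Finset.sum_add_distrib,
    ← Finset.mul_sum, ← Finset.mul_sum, ← Finset.mul_sum, ← Finset.mul_sum,
    momentD, momentD, momentD, momentD, momentD,
    castD4 m, castD3 m, castD2 m, Nat.descFactorial_one, Nat.descFactorial_zero]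
  push_cast
  ring

private lemma moment4_le (m : ℕ) (hm : 1 ≤ m) (x : ℝ) (hx0 : 0 ≤ x) (hx1 : x ≤ 1) :
    ∑ k ∈ Finset.range (m+1),
      (m.choose k : ℝ) * x^k * (1-x)^(m-k) * ((k:ℝ) - (m:ℝ)*x)^4 ≤ (m:ℝ)^2 := by
  rw [moment4]
  have hM : (1:ℝ) ≤ (m:ℝ) := by exact_mod_cast hm
  set u : ℝ := x*(1-x) with hu
  have hu0 : 0 ≤ u := mul_nonneg hx0 (by linarith)
  have hu4 : u ≤ 1/4 := by nlinarith [sq_nonneg (1 - 2*x)]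
  have h1 : (m:ℝ)*u ≤ (m:ℝ)^2/4 := by nlinarith
  have hu2 : u^2 ≤ 1/16 := by nlinarith
  have h2 : 3*(m:ℝ)*((m:ℝ)-2)*u^2 ≤ 3*(m:ℝ)^2/16 := by
    have e1 : 3*(m:ℝ)*((m:ℝ)-2)*u^2 ≤ 3*(m:ℝ)*(m:ℝ)*u^2 := by nlinarith [sq_nonneg u]
    have e2 : 3*(m:ℝ)*(m:ℝ)*u^2 ≤ 3*(m:ℝ)*(m:ℝ)*(1/16) := by nlinarith [sq_nonneg (m:ℝ)]
    nlinarith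
  have expand : (m:ℝ)*x*(1-x)*(1+3*((m:ℝ)-2)*x*(1-x))
      = (m:ℝ)*u + 3*(m:ℝ)*((m:ℝ)-2)*u^2 := by rw [hu]; ring
  rw [expand]
  nlinarith

/-- coefficient `(n+1) * C(n,j) x^j (1-x)^(n-j)` shifted by one, with value `0` at `0`. -/
private noncomputable def aPrev (n : ℕ) (x : ℝ) : ℕ → ℝ
  | 0 => 0
  | (j+1) => ((n:ℝ)+1) * ((n.choose j : ℕ):ℝ) * x^j * (1-x)^(n-j)

private lemma coeff_id (n : ℕ) (x : ℝ) (hx0 : x ≠ 0) (hx1 : (1:ℝ) - x ≠ 0) (k : ℕ)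
    (hk : k ≤ n+1) :
    (((n+1).choose k : ℕ) : ℝ) * x^k * (1-x)^(n+1-k) * ((k:ℝ) - ((n:ℝ)+1)*x) / (x*(1-x))
    = aPrev n x k - ((n:ℝ)+1) * ((n.choose k : ℕ):ℝ) * x^k * (1-x)^(n-k) := by
  rw [div_eq_iff (mul_ne_zero hx0 hx1)]
  match k with
  | 0 =>
    simp only [aPrev, Nat.choose_zero_right, Nat.cast_one, Nat.cast_zero, pow_zero,
      Nat.sub_zero, one_mul, mul_one, zero_sub]
    rw [pow_succ]
    ring
  | (j+1) =>
    have hjn : j ≤ n := by omega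
    have hs : n + 1 - (j + 1) = n - j := by omega
    rw [hs]
    simp only [aPrev]
    have id1 : (((n+1).choose (j+1) : ℕ) : ℝ) * ((j:ℝ)+1)
        = ((n:ℝ)+1) * ((n.choose j : ℕ):ℝ) := by
      have := (Nat.add_one_mul_choose_eq n j).symm
      exact_mod_cast congrArg (fun t : ℕ => (t:ℝ)) this
    have id2 : (((n+1).choose (j+1) : ℕ) : ℝ) * ((n:ℝ) - (j:ℝ))
        = ((n:ℝ)+1) * ((n.choose (j+1) : ℕ):ℝ) := by
      have h1 : (n+1).choose (j+2) * (j+2) = (n+1).choose (j+1) * (n + 1 - (j+1)) :=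
        Nat.choose_succ_right_eq (n+1) (j+1)
      have h2 : (n+1) * n.choose (j+1) = (n+1).choose (j+2) * (j+2) :=
        Nat.add_one_mul_choose_eq n (j+1)
      have h3 : (n+1).choose (j+1) * (n - j) = (n+1) * n.choose (j+1) := by
        rw [h2, h1]; congr 1; omega
      have h4 : ((n - j : ℕ) : ℝ) = (n:ℝ) - (j:ℝ) := by
        rw [Nat.cast_sub hjn]
      calc (((n+1).choose (j+1) : ℕ) : ℝ) * ((n:ℝ) - (j:ℝ))
          = (((n+1).choose (j+1) : ℕ) : ℝ) * ((n - j : ℕ) : ℝ) := by rw [h4]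
        _ = (((n+1).choose (j+1) * (n - j) : ℕ) : ℝ) := by push_cast; ring
        _ = (((n+1) * n.choose (j+1) : ℕ) : ℝ) := by rw [h3]
        _ = ((n:ℝ)+1) * ((n.choose (j+1) : ℕ):ℝ) := by push_cast; ring
    rcases Nat.lt_or_ge j n with hjn' | hjn'
    · have h2 : n - j = (n - (j+1)) + 1 := by omega
      rw [h2]
      push_cast
      linear_combination (x^j*x*(1-x)^(n-(j+1))*(1-x)*(1-x)) * id1
        - (x^j*x*(1-x)^(n-(j+1))*(1-x)*x) * id2
    · have hje : j = n := by omega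
      subst hje
      simp only [Nat.choose_self, Nat.choose_succ_self, Nat.sub_self, Nat.cast_one,
        Nat.cast_zero, pow_zero, mul_one, mul_zero, zero_mul, sub_zero]
      push_cast
      ring

private lemma abel_sum (n : ℕ) (x : ℝ) (hx0 : x ≠ 0) (hx1 : (1:ℝ) - x ≠ 0) (G : ℕ → ℝ) :
    ∑ k ∈ Finset.range (n+2),
      (((n+1).choose k : ℕ) : ℝ) * x^k * (1-x)^(n+1-k) * ((k:ℝ) - ((n:ℝ)+1)*x) / (x*(1-x)) * G k
    = ∑ k ∈ Finset.range (n+1),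
      ((n:ℝ)+1) * ((n.choose k : ℕ):ℝ) * x^k * (1-x)^(n-k) * (G (k+1) - G k) := by
  have step1 : ∀ k ∈ Finset.range (n+2),
      (((n+1).choose k : ℕ) : ℝ) * x^k * (1-x)^(n+1-k) * ((k:ℝ) - ((n:ℝ)+1)*x) / (x*(1-x)) * G k
      = aPrev n x k * G k - ((n:ℝ)+1) * ((n.choose k : ℕ):ℝ) * x^k * (1-x)^(n-k) * G k := by
    intro k hk
    simp only [Finset.mem_range] at hk
    rw [coeff_id n x hx0 hx1 k (by omega)]
    ring
  rw [Finset.sum_congr rfl step1, Finset.sum_sub_distrib]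
  have e1 : ∑ k ∈ Finset.range (n+2), aPrev n x k * G k
      = ∑ k ∈ Finset.range (n+1), ((n:ℝ)+1) * ((n.choose k : ℕ):ℝ) * x^k * (1-x)^(n-k) * G (k+1) := by
    rw [Finset.sum_range_succ' (fun k => aPrev n x k * G k) (n+1)]
    simp only [aPrev, zero_mul, add_zero]
  have e2 : ∑ k ∈ Finset.range (n+2), ((n:ℝ)+1) * ((n.choose k : ℕ):ℝ) * x^k * (1-x)^(n-k) * G k
      = ∑ k ∈ Finset.range (n+1), ((n:ℝ)+1) * ((n.choose k : ℕ):ℝ) * x^k * (1-x)^(n-k) * G k := by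
    rw [Finset.sum_range_succ]
    simp [Nat.choose_succ_self]
  rw [e1, e2, ← Finset.sum_sub_distrib]
  exact Finset.sum_congr rfl (fun k _ => by ring)

private lemma intInt (f : ℝ → ℝ) (hf : IntegrableOn f (Set.Icc 0 1)) {a b : ℝ}
    (ha : a ∈ Set.Icc (0:ℝ) 1) (hb : b ∈ Set.Icc (0:ℝ) 1) :
    IntervalIntegrable f MeasureTheory.volume a b := by
  rw [intervalIntegrable_iff]
  exact hf.mono_set ((Set.uIoc_subset_uIcc).trans (Set.uIcc_subset_Icc ha hb))

private lemma key_identity (f : ℝ → ℝ) (hf : IntegrableOn f (Set.Icc 0 1))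
    (x : ℝ) (hx0 : 0 < x) (hx1 : x < 1) (n : ℕ) :
    lorentzP f n x - f x
      = ∑ k ∈ Finset.range (n+2),
          (((n+1).choose k : ℕ):ℝ) * x^k * (1-x)^(n+1-k) * ((k:ℝ) - ((n:ℝ)+1)*x) / (x*(1-x))
            * ((fun k : ℕ => (∫ t in (0:ℝ)..((k:ℝ)/((n:ℝ)+1)), f t) - (∫ t in (0:ℝ)..x, f t)
               - f x * ((k:ℝ)/((n:ℝ)+1) - x)) k) := by
  rw [abel_sum n x hx0.ne' (by linarith)]
  have h01 : (0:ℝ) ∈ Set.Icc (0:ℝ) 1 := Set.left_mem_Icc.2 zero_le_one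
  have hterm : ∀ k ∈ Finset.range (n+1),
      ((n:ℝ)+1) * ((n.choose k : ℕ):ℝ) * x^k * (1-x)^(n-k) *
        ((fun k : ℕ => (∫ t in (0:ℝ)..((k:ℝ)/((n:ℝ)+1)), f t) - (∫ t in (0:ℝ)..x, f t)
           - f x * ((k:ℝ)/((n:ℝ)+1) - x)) (k+1)
         - (fun k : ℕ => (∫ t in (0:ℝ)..((k:ℝ)/((n:ℝ)+1)), f t) - (∫ t in (0:ℝ)..x, f t)
           - f x * ((k:ℝ)/((n:ℝ)+1) - x)) k)
      = (n.choose k : ℝ) * x ^ k * (1 - x) ^ (n - k) * ((n : ℝ) + 1) *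
          (∫ t in ((k : ℝ) / ((n:ℝ) + 1))..(((k : ℝ) + 1) / ((n:ℝ) + 1)), f t)
        - f x * ((n.choose k : ℝ) * x^k * (1-x)^(n-k)) := by
    intro k hk
    simp only [Finset.mem_range] at hk
    have hkn : k ≤ n := by omega
    have hm0 : (0:ℝ) < (n:ℝ)+1 := by positivity
    have hkr : (k:ℝ) ≤ (n:ℝ)+1 := by exact_mod_cast Nat.le_succ_of_le hkn
    have hkr1 : (k:ℝ)+1 ≤ (n:ℝ)+1 := by
      have : (k:ℝ) ≤ (n:ℝ) := by exact_mod_cast hkn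
      linarith
    have ht1 : (k:ℝ)/((n:ℝ)+1) ∈ Set.Icc (0:ℝ) 1 :=
      ⟨by positivity, by rw [div_le_one hm0]; exact hkr⟩
    have ht2 : ((k:ℝ)+1)/((n:ℝ)+1) ∈ Set.Icc (0:ℝ) 1 :=
      ⟨by positivity, by rw [div_le_one hm0]; exact hkr1⟩
    have hsub : (∫ t in (0:ℝ)..(((k:ℝ)+1)/((n:ℝ)+1)), f t) - (∫ t in (0:ℝ)..((k:ℝ)/((n:ℝ)+1)), f t)
        = ∫ t in ((k:ℝ)/((n:ℝ)+1))..(((k:ℝ)+1)/((n:ℝ)+1)), f t :=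
      integral_interval_sub_left (intInt f hf h01 ht2) (intInt f hf h01 ht1)
    simp only []
    push_cast
    rw [← hsub]
    field_simp
    ring
  rw [Finset.sum_congr rfl hterm, Finset.sum_sub_distrib, ← Finset.mul_sum, moment0 n x, mul_one]
  rw [lorentzP]


set_option maxHeartbeats 2000000 in
/-- Lorentz: if `f ∈ L¹[0,1]`, `F(x) = ∫₀ˣ f`, then at every point `x ∈ (0,1)` where
`F'(x) = f(x)` (i.e. almost everywhere), `P_n(f,x) → f(x)`. -/
theorem lorentzP_tendsto (f : ℝ → ℝ) (hf : IntegrableOn f (Set.Icc 0 1))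
    (x : ℝ) (hx : x ∈ Set.Ioo (0 : ℝ) 1)
    (hF : HasDerivAt (fun s => ∫ t in (0 : ℝ)..s, f t) (f x) x) :
    Tendsto (fun n => lorentzP f n x) atTop (nhds (f x)) := by
  obtain ⟨hx0, hx1⟩ := hx
  have hq0 : (0:ℝ) < 1 - x := by linarith
  have hc : (0:ℝ) < x * (1-x) := mul_pos hx0 hq0
  have hx01 : x ∈ Set.Icc (0:ℝ) 1 := ⟨hx0.le, hx1.le⟩
  have h01 : (0:ℝ) ∈ Set.Icc (0:ℝ) 1 := Set.left_mem_Icc.2 zero_le_one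
  set M : ℝ := (∫ t in Set.Icc (0:ℝ) 1, |f t|) + |f x| with hMdef
  have hM0 : 0 ≤ M :=
    add_nonneg (MeasureTheory.integral_nonneg (fun t => abs_nonneg _)) (abs_nonneg _)
  -- uniform bound for the远 error function
  have hgbd : ∀ s ∈ Set.Icc (0:ℝ) 1,
      |(∫ t in (0:ℝ)..s, f t) - (∫ t in (0:ℝ)..x, f t) - f x * (s - x)| ≤ M := by
    intro s hs
    have hsub : (∫ t in (0:ℝ)..s, f t) - (∫ t in (0:ℝ)..x, f t) = ∫ t in x..s, f t :=
      integral_interval_sub_left (intInt f hf h01 hs) (intInt f hf h01 hx01)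
    have h1 : |∫ t in x..s, f t| ≤ ∫ t in Set.Icc (0:ℝ) 1, |f t| := by
      calc |∫ t in x..s, f t| ≤ ∫ t in Set.uIoc x s, |f t| := by
            simpa using intervalIntegral.norm_integral_le_integral_norm_uIoc
              (a := x) (b := s) (f := f) (μ := volume)
        _ ≤ ∫ t in Set.Icc (0:ℝ) 1, |f t| := by
            apply MeasureTheory.setIntegral_mono_set hf.abs
            · filter_upwards with t using abs_nonneg _
            · exact HasSubset.Subset.eventuallyLE
                ((Set.uIoc_subset_uIcc).trans (Set.uIcc_subset_Icc hx01 hs))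
    have h2 : |f x * (s - x)| ≤ |f x| := by
      rw [abs_mul]
      have hs1 : |s - x| ≤ 1 := by
        rw [abs_le]; exact ⟨by linarith [hs.1], by linarith [hs.2]⟩
      nlinarith [abs_nonneg (f x)]
    calc |(∫ t in (0:ℝ)..s, f t) - (∫ t in (0:ℝ)..x, f t) - f x * (s - x)|
        ≤ |(∫ t in (0:ℝ)..s, f t) - (∫ t in (0:ℝ)..x, f t)| + |f x * (s - x)| := by
          exact abs_sub _ _
      _ ≤ M := by rw [hsub, hMdef]; exact add_le_add h1 h2
  rw [Metric.tendsto_atTop]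
  intro ε hε
  have hε4 : 0 < ε/4 := by linarith
  have hlo := (hasDerivAt_iff_isLittleO.mp hF).def hε4
  rw [Metric.eventually_nhds_iff] at hlo
  obtain ⟨δ, hδ0, hδ⟩ := hlo
  obtain ⟨N, hN⟩ := exists_nat_gt (M / (δ^3 * (x*(1-x)) * (ε/4)))
  refine ⟨N, fun n hn => ?_⟩
  have mpos : (0:ℝ) < (n:ℝ)+1 := by positivity
  rw [Real.dist_eq, key_identity f hf x hx0 hx1 n]
  simp only []
  -- notation
  have hmom2 : ∑ k ∈ Finset.range (n+2),
      (((n+1).choose k : ℕ):ℝ) * x^k * (1-x)^(n+1-k) * ((k:ℝ) - ((n:ℝ)+1)*x)^2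
      = ((n:ℝ)+1)*x*(1-x) := by
    have h := moment2 (n+1) x
    push_cast at h
    exact h
  have hmom4 : ∑ k ∈ Finset.range (n+2),
      (((n+1).choose k : ℕ):ℝ) * x^k * (1-x)^(n+1-k) * ((k:ℝ) - ((n:ℝ)+1)*x)^4
      ≤ ((n:ℝ)+1)^2 := by
    have h := moment4_le (n+1) (by omega) x hx0.le hx1.le
    push_cast at h
    exact h
  have hterm : ∀ k ∈ Finset.range (n+2),
      (((n+1).choose k : ℕ):ℝ) * x^k * (1-x)^(n+1-k) * |(k:ℝ) - ((n:ℝ)+1)*x| *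
        |(∫ t in (0:ℝ)..((k:ℝ)/((n:ℝ)+1)), f t) - (∫ t in (0:ℝ)..x, f t)
          - f x * ((k:ℝ)/((n:ℝ)+1) - x)|
      ≤ (ε/4)/((n:ℝ)+1) *
          ((((n+1).choose k : ℕ):ℝ) * x^k * (1-x)^(n+1-k) * ((k:ℝ) - ((n:ℝ)+1)*x)^2)
        + M/((((n:ℝ)+1)*δ)^3) *
          ((((n+1).choose k : ℕ):ℝ) * x^k * (1-x)^(n+1-k) * ((k:ℝ) - ((n:ℝ)+1)*x)^4) := by
    intro k hk
    simp only [Finset.mem_range] at hk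
    have hkm : k ≤ n+1 := by omega
    set P : ℝ := (((n+1).choose k : ℕ):ℝ) * x^k * (1-x)^(n+1-k) with hP
    have hP0 : 0 ≤ P := by positivity
    set y : ℝ := (k:ℝ)/((n:ℝ)+1) with hy
    have hy01 : y ∈ Set.Icc (0:ℝ) 1 := by
      constructor
      · rw [hy]; positivity
      · rw [hy, div_le_one mpos]; exact_mod_cast hkm
    set A : ℝ := (k:ℝ) - ((n:ℝ)+1)*x with hA
    set G : ℝ := (∫ t in (0:ℝ)..y, f t) - (∫ t in (0:ℝ)..x, f t) - f x * (y - x) with hG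
    have hrel : A = ((n:ℝ)+1)*(y - x) := by
      rw [hA, hy]; field_simp
    have habs : |A| = ((n:ℝ)+1) * |y - x| := by
      rw [hrel, abs_mul, abs_of_pos mpos]
    rcases lt_or_ge |y - x| δ with hnear | hfar
    · have hgy : |G| ≤ ε/4 * |y - x| := by
        have h := hδ (show dist y x < δ by rw [Real.dist_eq]; exact hnear)
        simp only [Real.norm_eq_abs, smul_eq_mul] at h
        have : G = (∫ t in (0:ℝ)..y, f t) - (∫ t in (0:ℝ)..x, f t) - (y - x) * f x := by
          rw [hG]; ring
        rw [this]
        exact h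
      have hgy' : |G| ≤ ε/4 * |A| / ((n:ℝ)+1) := by
        rw [habs]
        rw [le_div_iff₀ mpos] at *
        nlinarith [abs_nonneg (y - x)]
      calc P * |A| * |G| ≤ P * |A| * (ε/4 * |A| / ((n:ℝ)+1)) := by
            exact mul_le_mul_of_nonneg_left hgy' (by positivity)
        _ = (ε/4)/((n:ℝ)+1) * (P * (|A| * |A|)) := by ring
        _ = (ε/4)/((n:ℝ)+1) * (P * A^2) := by rw [abs_mul_abs_self, ← pow_two]
        _ ≤ (ε/4)/((n:ℝ)+1) * (P * A^2) + M/((((n:ℝ)+1)*δ)^3) * (P * A^4) := by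
            have : 0 ≤ M/((((n:ℝ)+1)*δ)^3) * (P * A^4) := by positivity
            linarith
    · have hgy : |G| ≤ M := hgbd y hy01
      have hbig : ((n:ℝ)+1)*δ ≤ |A| := by
        rw [habs]
        exact mul_le_mul_of_nonneg_left hfar mpos.le
      have hBpos : (0:ℝ) < (((n:ℝ)+1)*δ)^3 := by positivity
      have hq : |A| ≤ A^4 / (((n:ℝ)+1)*δ)^3 := by
        rw [le_div_iff₀ hBpos]
        calc |A| * (((n:ℝ)+1)*δ)^3 ≤ |A| * |A|^3 := by
              exact mul_le_mul_of_nonneg_left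
                (pow_le_pow_left₀ (by positivity) hbig 3) (abs_nonneg _)
          _ = |A|^4 := by ring
          _ = |A^4| := by rw [abs_pow]
          _ = A^4 := abs_of_nonneg (by positivity)
      calc P * |A| * |G| ≤ P * |A| * M := by
            exact mul_le_mul_of_nonneg_left hgy (by positivity)
        _ ≤ P * (A^4 / (((n:ℝ)+1)*δ)^3) * M := by
            have := mul_le_mul_of_nonneg_left hq hP0
            exact mul_le_mul_of_nonneg_right this hM0
        _ = M/((((n:ℝ)+1)*δ)^3) * (P * A^4) := by ring
        _ ≤ (ε/4)/((n:ℝ)+1) * (P * A^2) + M/((((n:ℝ)+1)*δ)^3) * (P * A^4) := by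
            have : 0 ≤ (ε/4)/((n:ℝ)+1) * (P * A^2) := by positivity
            linarith
  -- assemble
  have hNn : M / (δ^3 * (x*(1-x)) * (ε/4)) < (n:ℝ)+1 := by
    have h1 : (N:ℝ) ≤ (n:ℝ) := by exact_mod_cast hn
    linarith
  have htail : M/((((n:ℝ)+1)*δ)^3) * ((n:ℝ)+1)^2 / (x*(1-x)) < ε/4 := by
    have hexp : M/((((n:ℝ)+1)*δ)^3) * ((n:ℝ)+1)^2 / (x*(1-x))
        = M / (((n:ℝ)+1) * δ^3 * (x*(1-x))) := by
      field_simp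
    rw [hexp, div_lt_iff₀ (by positivity)]
    rw [div_lt_iff₀ (by positivity)] at hNn
    nlinarith
  calc |∑ k ∈ Finset.range (n+2),
        (((n+1).choose k : ℕ):ℝ) * x^k * (1-x)^(n+1-k) * ((k:ℝ) - ((n:ℝ)+1)*x) / (x*(1-x))
          * ((∫ t in (0:ℝ)..((k:ℝ)/((n:ℝ)+1)), f t) - (∫ t in (0:ℝ)..x, f t)
             - f x * ((k:ℝ)/((n:ℝ)+1) - x))|
      ≤ ∑ k ∈ Finset.range (n+2),
        |(((n+1).choose k : ℕ):ℝ) * x^k * (1-x)^(n+1-k) * ((k:ℝ) - ((n:ℝ)+1)*x) / (x*(1-x))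
          * ((∫ t in (0:ℝ)..((k:ℝ)/((n:ℝ)+1)), f t) - (∫ t in (0:ℝ)..x, f t)
             - f x * ((k:ℝ)/((n:ℝ)+1) - x))| := Finset.abs_sum_le_sum_abs _ _
    _ = ∑ k ∈ Finset.range (n+2),
        (1/(x*(1-x))) * ((((n+1).choose k : ℕ):ℝ) * x^k * (1-x)^(n+1-k) * |(k:ℝ) - ((n:ℝ)+1)*x| *
          |(∫ t in (0:ℝ)..((k:ℝ)/((n:ℝ)+1)), f t) - (∫ t in (0:ℝ)..x, f t)
            - f x * ((k:ℝ)/((n:ℝ)+1) - x)|) := by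
        apply Finset.sum_congr rfl
        intro k _
        rw [abs_mul, abs_div, abs_mul, abs_of_pos hc, abs_mul, abs_mul,
          abs_of_nonneg (by positivity : (0:ℝ) ≤ (((n+1).choose k : ℕ):ℝ)),
          abs_of_nonneg (by positivity : (0:ℝ) ≤ x^k),
          abs_of_nonneg (by positivity : (0:ℝ) ≤ (1-x)^(n+1-k))]
        ring
    _ = (1/(x*(1-x))) * ∑ k ∈ Finset.range (n+2),
        ((((n+1).choose k : ℕ):ℝ) * x^k * (1-x)^(n+1-k) * |(k:ℝ) - ((n:ℝ)+1)*x| *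
          |(∫ t in (0:ℝ)..((k:ℝ)/((n:ℝ)+1)), f t) - (∫ t in (0:ℝ)..x, f t)
            - f x * ((k:ℝ)/((n:ℝ)+1) - x)|) := by rw [Finset.mul_sum]
    _ ≤ (1/(x*(1-x))) * ((ε/4)/((n:ℝ)+1) * (((n:ℝ)+1)*x*(1-x))
          + M/((((n:ℝ)+1)*δ)^3) * ((n:ℝ)+1)^2) := by
        apply mul_le_mul_of_nonneg_left _ (by positivity)
        calc ∑ k ∈ Finset.range (n+2),
            ((((n+1).choose k : ℕ):ℝ) * x^k * (1-x)^(n+1-k) * |(k:ℝ) - ((n:ℝ)+1)*x| *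
              |(∫ t in (0:ℝ)..((k:ℝ)/((n:ℝ)+1)), f t) - (∫ t in (0:ℝ)..x, f t)
                - f x * ((k:ℝ)/((n:ℝ)+1) - x)|)
            ≤ ∑ k ∈ Finset.range (n+2),
              ((ε/4)/((n:ℝ)+1) *
                ((((n+1).choose k : ℕ):ℝ) * x^k * (1-x)^(n+1-k) * ((k:ℝ) - ((n:ℝ)+1)*x)^2)
              + M/((((n:ℝ)+1)*δ)^3) *
                ((((n+1).choose k : ℕ):ℝ) * x^k * (1-x)^(n+1-k) * ((k:ℝ) - ((n:ℝ)+1)*x)^4)) :=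
              Finset.sum_le_sum hterm
          _ = (ε/4)/((n:ℝ)+1) * ∑ k ∈ Finset.range (n+2),
                ((((n+1).choose k : ℕ):ℝ) * x^k * (1-x)^(n+1-k) * ((k:ℝ) - ((n:ℝ)+1)*x)^2)
              + M/((((n:ℝ)+1)*δ)^3) * ∑ k ∈ Finset.range (n+2),
                ((((n+1).choose k : ℕ):ℝ) * x^k * (1-x)^(n+1-k) * ((k:ℝ) - ((n:ℝ)+1)*x)^4) := by
              rw [Finset.sum_add_distrib, Finset.mul_sum, Finset.mul_sum]
          _ ≤ (ε/4)/((n:ℝ)+1) * (((n:ℝ)+1)*x*(1-x)) + M/((((n:ℝ)+1)*δ)^3) * ((n:ℝ)+1)^2 := by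
              rw [hmom2]
              have h2 : 0 ≤ M/((((n:ℝ)+1)*δ)^3) := by positivity
              have := mul_le_mul_of_nonneg_left hmom4 h2
              linarith
    _ = ε/4 + M/((((n:ℝ)+1)*δ)^3) * ((n:ℝ)+1)^2 / (x*(1-x)) := by
        field_simp
    _ < ε/4 + ε/4 := by linarith
    _ < ε := by linarith
end

section
/- Let f : ℝ² → ℝ be bounded and Borel, vanishing outside K = [0,1]², such that the classical partial derivative ∂f/∂x₁ exists at every point of K and belongs to L¹(K). Then ∫₀¹∫₀¹ | n(f(x₁ + 1/n, x₂) − f(x₁, x₂)) − ∂f/∂x₁(x₁, x₂) | dx₁ dx₂ → 0 as n → ∞. -/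
open MeasureTheory Filter Set
open scoped ENNReal


/-- Generalized dominated convergence (Scheffé-type) for `lintegral`s tending to `0`. -/
lemma my_gdct {α : Type*} [MeasurableSpace α] {μ : Measure α}
    {F bnd : ℕ → α → ℝ≥0∞} {b : α → ℝ≥0∞}
    (hF : ∀ n, AEMeasurable (F n) μ) (hbnd : ∀ n, AEMeasurable (bnd n) μ)
    (hle : ∀ n, ∀ᵐ x ∂μ, F n x ≤ bnd n x)
    (hFlim : ∀ᵐ x ∂μ, Tendsto (fun n => F n x) atTop (nhds 0))
    (hblim : ∀ᵐ x ∂μ, Tendsto (fun n => bnd n x) atTop (nhds (b x)))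
    (hbae : ∀ᵐ x ∂μ, b x ≠ ⊤)
    (hbfin : ∫⁻ x, b x ∂μ ≠ ⊤)
    (hbi : Tendsto (fun n => ∫⁻ x, bnd n x ∂μ) atTop (nhds (∫⁻ x, b x ∂μ))) :
    Tendsto (fun n => ∫⁻ x, F n x ∂μ) atTop (nhds 0) := by
  set L := ∫⁻ x, b x ∂μ with hL
  have key : ∀ n, (∫⁻ x, (bnd n x - F n x) ∂μ) + ∫⁻ x, F n x ∂μ = ∫⁻ x, bnd n x ∂μ := by
    intro n
    rw [← lintegral_add_right' _ (hF n)]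
    refine lintegral_congr_ae ?_
    filter_upwards [hle n] with x hx
    exact tsub_add_cancel_of_le hx
  have fatou : L ≤ liminf (fun n => ∫⁻ x, (bnd n x - F n x) ∂μ) atTop := by
    have hEq : L = ∫⁻ x, liminf (fun n => bnd n x - F n x) atTop ∂μ := by
      refine lintegral_congr_ae ?_
      filter_upwards [hblim, hFlim, hbae] with x h1 h2 h3
      have ht : Tendsto (fun n => bnd n x - F n x) atTop (nhds (b x - 0)) :=
        ENNReal.Tendsto.sub h1 h2 (Or.inl h3)
      simpa using ht.liminf_eq.symm
    rw [hEq]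
    exact lintegral_liminf_le' fun n => (hbnd n).sub (hF n)
  rw [ENNReal.tendsto_atTop_zero]
  intro ε hε
  rcases eq_or_ne ε ⊤ with hεtop | hεtop
  · exact ⟨0, fun n _ => hεtop ▸ le_top⟩
  have hε2 : (0 : ℝ≥0∞) < ε / 2 := ENNReal.half_pos hε.ne'
  have h1 : ∀ᶠ n in atTop, ∫⁻ x, bnd n x ∂μ < L + ε / 2 :=
    hbi.eventually_lt_const (ENNReal.lt_add_right hbfin hε2.ne')
  have h2 : ∀ᶠ n in atTop, L - ε / 2 ≤ ∫⁻ x, (bnd n x - F n x) ∂μ := by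
    rcases eq_or_ne L 0 with hL0 | hL0
    · simp [hL0]
    · have hlt : L - ε / 2 < liminf (fun n => ∫⁻ x, (bnd n x - F n x) ∂μ) atTop :=
        lt_of_lt_of_le (ENNReal.sub_lt_self hbfin hL0 hε2.ne') fatou
      exact (eventually_lt_of_lt_liminf hlt).mono fun n h => h.le
  have h3 : ∀ᶠ n in atTop, ∫⁻ x, F n x ∂μ ≤ ε := by
    filter_upwards [h1, h2] with n hn1 hn2
    have hcfin : ∫⁻ x, (bnd n x - F n x) ∂μ ≠ ⊤ := by
      refine ne_top_of_le_ne_top ?_ (le_trans (lintegral_mono fun x => tsub_le_self) le_rfl)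
      exact (lt_of_lt_of_le hn1 le_top).ne
    have ha : ∫⁻ x, F n x ∂μ = (∫⁻ x, bnd n x ∂μ) - ∫⁻ x, (bnd n x - F n x) ∂μ := by
      refine ENNReal.eq_sub_of_add_eq hcfin ?_
      rw [add_comm]; exact key n
    calc ∫⁻ x, F n x ∂μ
        = (∫⁻ x, bnd n x ∂μ) - ∫⁻ x, (bnd n x - F n x) ∂μ := ha
      _ ≤ (L + ε / 2) - (L - ε / 2) := tsub_le_tsub hn1.le hn2
      _ ≤ ε := by
          rw [tsub_le_iff_right]
          calc L + ε / 2 ≤ (ε / 2 + (L - ε / 2)) + ε / 2 := by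
                exact add_le_add le_add_tsub le_rfl
            _ = ε + (L - ε / 2) := by rw [add_right_comm, ENNReal.add_halves]
  rwa [eventually_atTop] at h3

/-- Pointwise convergence of the difference quotient. -/
lemma my_dq_tendsto {u : ℝ → ℝ} {d x : ℝ} (h : HasDerivAt u d x) :
    Tendsto (fun n : ℕ => (n : ℝ) * (u (x + 1 / n) - u x)) atTop (nhds d) := by
  have hs := hasDerivAt_iff_tendsto_slope.mp h
  have h1 : Tendsto (fun n : ℕ => x + 1 / (n : ℝ)) atTop (nhdsWithin x {x}ᶜ) := by
    apply tendsto_nhdsWithin_of_tendsto_nhds_of_eventually_within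
    · simpa using tendsto_const_nhds.add (tendsto_one_div_atTop_nhds_zero_nat (𝕜 := ℝ))
    · filter_upwards [eventually_gt_atTop 0] with n hn
      have hn' : (0 : ℝ) < 1 / (n : ℝ) := by positivity
      simp only [mem_compl_iff, mem_singleton_iff]
      intro hcon
      nlinarith [hcon]
  have h2 := hs.comp h1
  apply h2.congr'
  filter_upwards [eventually_gt_atTop 0] with n hn
  have hn' : (0 : ℝ) < 1 / (n : ℝ) := by positivity
  simp only [Function.comp_apply, slope_def_field]
  rw [add_sub_cancel_left]
  have hn0 : (n : ℝ) ≠ 0 := by positivity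
  field_simp



lemma my_ioc_eq_indicator {G : ℝ → ℝ≥0∞} {c : ℝ} (x : ℝ) :
    ∫⁻ t in Ioc x (x + c), G t =
      ∫⁻ t, ({p : ℝ × ℝ | p.1 < p.2 ∧ p.2 ≤ p.1 + c}.indicator (fun p => G p.2)) (x, t) := by
  rw [← lintegral_indicator measurableSet_Ioc]
  congr 1

lemma my_H_meas {G : ℝ → ℝ≥0∞} (hG : Measurable G) (c : ℝ) :
    Measurable ({p : ℝ × ℝ | p.1 < p.2 ∧ p.2 ≤ p.1 + c}.indicator (fun p => G p.2)) := by
  refine (hG.comp measurable_snd).indicator ?_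
  exact (measurableSet_lt measurable_fst measurable_snd).inter
    (measurableSet_le measurable_snd (measurable_fst.add_const c))

lemma my_ioc_meas {G : ℝ → ℝ≥0∞} (hG : Measurable G) (c : ℝ) :
    Measurable fun x => ∫⁻ t in Ioc x (x + c), G t := by
  have h := my_H_meas hG c
  simp_rw [my_ioc_eq_indicator (G := G) (c := c)]
  exact Measurable.lintegral_prod_right (f := fun x t =>
    ({p : ℝ × ℝ | p.1 < p.2 ∧ p.2 ≤ p.1 + c}.indicator (fun p => G p.2)) (x, t)) h

lemma my_ioc_total {G : ℝ → ℝ≥0∞} (hG : Measurable G) {c : ℝ} (hc : 0 < c) :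
    ∫⁻ x : ℝ, ∫⁻ t in Ioc x (x + c), G t = ENNReal.ofReal c * ∫⁻ t, G t := by
  have h := my_H_meas hG c
  simp_rw [my_ioc_eq_indicator (G := G) (c := c)]
  rw [lintegral_lintegral_swap (by exact h.aemeasurable)]
  have e2 : ∀ t : ℝ, (∫⁻ x, ({p : ℝ × ℝ | p.1 < p.2 ∧ p.2 ≤ p.1 + c}.indicator
      (fun p => G p.2)) (x, t)) = G t * ENNReal.ofReal c := by
    intro t
    have he : (fun x => ({p : ℝ × ℝ | p.1 < p.2 ∧ p.2 ≤ p.1 + c}.indicator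
        (fun p => G p.2)) (x, t)) = (Ico (t - c) t).indicator (fun _ => G t) := by
      ext x
      simp only [Set.indicator_apply, mem_setOf_eq, mem_Ico]
      have hiff : (x < t ∧ t ≤ x + c) ↔ (t - c ≤ x ∧ x < t) := by
        constructor <;> rintro ⟨ha, hb⟩ <;> constructor <;> linarith
      rw [if_congr hiff rfl rfl]
    rw [he, lintegral_indicator measurableSet_Ico, setLIntegral_const, Real.volume_Ico,
      sub_sub_cancel]
  simp_rw [e2]
  rw [lintegral_mul_const _ hG, mul_comm]

lemma my_slice {u g : ℝ → ℝ} (hg : Measurable g) (hgi : Integrable g volume)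
    (hu : ∀ x, HasDerivAt u (g x) x) :
    (∀ n : ℕ, ∫ x in Ioc (0:ℝ) 1, |(n:ℝ) * (u (x + 1/n) - u x) - g x| ≤ 2 * ∫ x : ℝ, |g x|) ∧
    Tendsto (fun n : ℕ => ∫ x in Ioc (0:ℝ) 1, |(n:ℝ) * (u (x + 1/n) - u x) - g x|)
      atTop (nhds 0) := by
  have huc : Continuous u := by
    rw [continuous_iff_continuousAt]; exact fun x => (hu x).continuousAt
  have hum : Measurable u := huc.measurable
  have hDm : ∀ n : ℕ, Measurable (fun x => (n:ℝ) * (u (x + 1/(n:ℝ)) - u x)) := fun n =>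
    measurable_const.mul ((hum.comp (measurable_id.add_const _)).sub hum)
  set G : ℝ → ℝ≥0∞ := fun t => ENNReal.ofReal |g t| with hGdef
  have hGm : Measurable G := ENNReal.measurable_ofReal.comp hg.abs
  have habs_int : Integrable (fun t => |g t|) volume := hgi.abs
  have hGofReal : ENNReal.ofReal (∫ t, |g t|) = ∫⁻ t, G t :=
    ofReal_integral_eq_lintegral_ofReal habs_int (ae_of_all _ fun t => abs_nonneg _)
  have hGfin : ∫⁻ t, G t ≠ ⊤ := by rw [← hGofReal]; exact ENNReal.ofReal_ne_top
  have hftc : ∀ (n : ℕ) (x : ℝ), u (x + 1/(n:ℝ)) - u x = ∫ t in x..(x + 1/(n:ℝ)), g t :=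
    fun n x => (intervalIntegral.integral_eq_sub_of_hasDerivAt (fun t _ => hu t)
      hgi.intervalIntegrable).symm
  have hioc_int : ∀ x y : ℝ, IntegrableOn (fun t => |g t|) (Ioc x y) volume :=
    fun x y => habs_int.integrableOn
  have habs : ∀ (n : ℕ) (x : ℝ), |(n:ℝ) * (u (x + 1/(n:ℝ)) - u x)| ≤
      (n:ℝ) * ∫ t in Ioc x (x + 1/(n:ℝ)), |g t| := by
    intro n x
    have h0 : (0:ℝ) ≤ 1/(n:ℝ) := by positivity
    rw [abs_mul, abs_of_nonneg (by positivity : (0:ℝ) ≤ (n:ℝ))]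
    apply mul_le_mul_of_nonneg_left ?_ (by positivity)
    rw [hftc n x, ← intervalIntegral.integral_of_le (by linarith : x ≤ x + 1/(n:ℝ))]
    exact intervalIntegral.abs_integral_le_integral_abs (by linarith)
  set A : ℕ → ℝ → ℝ≥0∞ := fun n x => (n : ℝ≥0∞) * ∫⁻ t in Ioc x (x + 1/(n:ℝ)), G t with hA
  have hAof : ∀ (n : ℕ) (x : ℝ),
      ENNReal.ofReal ((n:ℝ) * ∫ t in Ioc x (x + 1/(n:ℝ)), |g t|) = A n x := by
    intro n x
    rw [ENNReal.ofReal_mul (by positivity), ENNReal.ofReal_natCast,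
      ofReal_integral_eq_lintegral_ofReal (hioc_int _ _) (ae_of_all _ fun t => abs_nonneg _)]
  have hAm : ∀ n, Measurable (A n) := fun n => measurable_const.mul (my_ioc_meas hGm _)
  have hAle : ∀ n x, A n x ≤ (n : ℝ≥0∞) * ∫⁻ t, G t := fun n x =>
    mul_le_mul' le_rfl (lintegral_mono' Measure.restrict_le_self le_rfl)
  -- Lebesgue differentiation: a.e. x, A n x → G x
  have hld : ∀ᵐ x : ℝ, Tendsto (fun n => A n x) atTop (nhds (G x)) := by
    filter_upwards [IsUnifLocDoublingMeasure.ae_tendsto_average_norm_sub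
      volume (hgi.locallyIntegrable) 1] with x hx
    have hδ : Tendsto (fun n : ℕ => 1/(2*(n:ℝ))) atTop (nhdsWithin 0 (Ioi 0)) := by
      apply tendsto_nhdsWithin_of_tendsto_nhds_of_eventually_within
      · exact tendsto_const_nhds.div_atTop
          ((tendsto_natCast_atTop_atTop).const_mul_atTop two_pos)
      · filter_upwards [eventually_gt_atTop 0] with n hn
        exact mem_Ioi.2 (by positivity)
    have hmem : ∀ᶠ n : ℕ in atTop,
        x ∈ Metric.closedBall (x + 1/(2*(n:ℝ))) (1 * (1/(2*(n:ℝ)))) := by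
      filter_upwards [eventually_gt_atTop 0] with n hn
      have hδ0 : (0:ℝ) ≤ 1/(2*(n:ℝ)) := by positivity
      simp only [Metric.mem_closedBall, Real.dist_eq, one_mul]
      rw [abs_sub_comm, add_sub_cancel_left, abs_of_nonneg hδ0]
    have hx' := hx (fun n : ℕ => x + 1/(2*(n:ℝ))) (fun n : ℕ => 1/(2*(n:ℝ))) hδ hmem
    have hball : ∀ n : ℕ, 1 ≤ n →
        Metric.closedBall (x + 1/(2*(n:ℝ))) (1/(2*(n:ℝ))) = Icc x (x + 1/(n:ℝ)) := by
      intro n hn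
      have hn0 : (n:ℝ) ≠ 0 := by positivity
      rw [Real.closedBall_eq_Icc]
      have h1 : x + 1/(2*(n:ℝ)) - 1/(2*(n:ℝ)) = x := by ring
      have h2 : x + 1/(2*(n:ℝ)) + 1/(2*(n:ℝ)) = x + 1/(n:ℝ) := by
        field_simp
        ring
      rw [h1, h2]
    have herr : ∀ n : ℕ, 1 ≤ n →
        abs ((n:ℝ) * (∫ t in Ioc x (x + 1/(n:ℝ)), |g t|) - |g x|) ≤
        ⨍ y in Metric.closedBall (x + 1/(2*(n:ℝ))) (1/(2*(n:ℝ))), ‖g y - g x‖ := by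
      intro n hn
      have hn0 : (0:ℝ) < (n:ℝ) := by positivity
      have hc : (0:ℝ) < 1/(n:ℝ) := by positivity
      rw [hball n hn, setAverage_eq, Real.volume_real_Icc_of_le (by linarith : x ≤ x + 1/(n:ℝ)),
        add_sub_cancel_left, smul_eq_mul,
        show ((1:ℝ)/(n:ℝ))⁻¹ = (n:ℝ) by field_simp]
      have hconst_int : IntegrableOn (fun _ : ℝ => |g x|) (Ioc x (x + 1/(n:ℝ))) volume :=
        integrableOn_const (by rw [Real.volume_Ioc]; exact ENNReal.ofReal_ne_top)
      have hconst : ∫ t in Ioc x (x + 1/(n:ℝ)), |g x| = (1/(n:ℝ)) * |g x| := by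
        rw [setIntegral_const, Real.volume_real_Ioc_of_le (by linarith : x ≤ x + 1/(n:ℝ)),
          add_sub_cancel_left, smul_eq_mul]
      have hsub : (n:ℝ) * (∫ t in Ioc x (x + 1/(n:ℝ)), |g t|) - |g x|
          = (n:ℝ) * ∫ t in Ioc x (x + 1/(n:ℝ)), (|g t| - |g x|) := by
        rw [integral_sub (hioc_int _ _) hconst_int, hconst]
        field_simp
      rw [hsub]
      have hconst_g : IntegrableOn (fun _ : ℝ => g x) (Ioc x (x + 1/(n:ℝ))) volume :=
        integrableOn_const (by rw [Real.volume_Ioc]; exact ENNReal.ofReal_ne_top)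
      have hconst_g' : IntegrableOn (fun _ : ℝ => g x) (Icc x (x + 1/(n:ℝ))) volume :=
        integrableOn_const (by rw [Real.volume_Icc]; exact ENNReal.ofReal_ne_top)
      have hsub_int : IntegrableOn (fun t => |g t| - |g x|) (Ioc x (x + 1/(n:ℝ))) volume :=
        (hioc_int _ _).sub hconst_int
      have hgsub_int : IntegrableOn (fun t => g t - g x) (Ioc x (x + 1/(n:ℝ))) volume :=
        hgi.integrableOn.sub hconst_g
      have hgsub_int' : IntegrableOn (fun t => g t - g x) (Icc x (x + 1/(n:ℝ))) volume :=
        hgi.integrableOn.sub hconst_g'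
      have step1 : abs ((n:ℝ) * ∫ t in Ioc x (x + 1/(n:ℝ)), (|g t| - |g x|))
          ≤ (n:ℝ) * ∫ t in Ioc x (x + 1/(n:ℝ)), |(|g t| - |g x|)| := by
        rw [abs_mul, abs_of_nonneg hn0.le]
        apply mul_le_mul_of_nonneg_left ?_ hn0.le
        simpa [Real.norm_eq_abs] using
          norm_integral_le_integral_norm (μ := volume.restrict (Ioc x (x + 1/(n:ℝ))))
            (f := fun t => |g t| - |g x|)
      refine le_trans step1 ?_
      have step2 : ∫ t in Ioc x (x + 1/(n:ℝ)), |(|g t| - |g x|)|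
          ≤ ∫ t in Ioc x (x + 1/(n:ℝ)), |g t - g x| := by
        apply integral_mono hsub_int.abs hgsub_int.abs
        intro t
        exact abs_abs_sub_abs_le_abs_sub _ _
      have step3 : ∫ t in Ioc x (x + 1/(n:ℝ)), |g t - g x|
          ≤ ∫ t in Icc x (x + 1/(n:ℝ)), |g t - g x| := by
        apply setIntegral_mono_set hgsub_int'.abs
          (ae_of_all _ fun t => abs_nonneg _)
          (HasSubset.Subset.eventuallyLE Ioc_subset_Icc_self)
      have : ∫ t in Icc x (x + 1/(n:ℝ)), |g t - g x| = ∫ y in Icc x (x + 1/(n:ℝ)), ‖g y - g x‖ := by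
        simp [Real.norm_eq_abs]
      rw [← this]
      have hfin : (0:ℝ) ≤ (n:ℝ) := hn0.le
      nlinarith [step2, step3, mul_le_mul_of_nonneg_left (le_trans step2 step3) hfin]
    -- squeeze: real averages converge
    have haR : Tendsto (fun n : ℕ => (n:ℝ) * ∫ t in Ioc x (x + 1/(n:ℝ)), |g t|)
        atTop (nhds |g x|) := by
      have habs0 : Tendsto
          (fun n : ℕ => abs ((n:ℝ) * (∫ t in Ioc x (x + 1/(n:ℝ)), |g t|) - |g x|))
          atTop (nhds 0) := by
        apply squeeze_zero' (Eventually.of_forall fun n => abs_nonneg _) ?_ hx'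
        filter_upwards [eventually_ge_atTop 1] with n hn
        exact herr n hn
      have h1 : Tendsto
          (fun n : ℕ => (n:ℝ) * (∫ t in Ioc x (x + 1/(n:ℝ)), |g t|) - |g x|)
          atTop (nhds 0) :=
        tendsto_of_tendsto_of_tendsto_of_le_of_le (by simpa using habs0.neg) habs0
          (fun n => neg_abs_le _) (fun n => le_abs_self _)
      have := h1.add (tendsto_const_nhds (x := |g x|))
      simpa using this
    have := ENNReal.tendsto_ofReal haR
    refine this.congr fun n => hAof n x
  -- now the gdct application
  have hFlim : ∀ x : ℝ, Tendsto
      (fun n : ℕ => ENNReal.ofReal |(n:ℝ) * (u (x + 1/(n:ℝ)) - u x) - g x|) atTop (nhds 0) := by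
    intro x
    have hd := my_dq_tendsto (hu x)
    have h1 : Tendsto (fun n : ℕ => (n:ℝ) * (u (x + 1/(n:ℝ)) - u x) - g x) atTop (nhds 0) := by
      simpa using hd.sub (tendsto_const_nhds (x := g x))
    have h2 : Tendsto (fun n : ℕ => |(n:ℝ) * (u (x + 1/(n:ℝ)) - u x) - g x|) atTop (nhds 0) := by
      simpa using h1.abs
    simpa using ENNReal.tendsto_ofReal h2
  have hFle : ∀ (n : ℕ) (x : ℝ),
      ENNReal.ofReal |(n:ℝ) * (u (x + 1/(n:ℝ)) - u x) - g x| ≤ A n x + G x := by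
    intro n x
    calc ENNReal.ofReal |(n:ℝ) * (u (x + 1/(n:ℝ)) - u x) - g x|
        ≤ ENNReal.ofReal (|(n:ℝ) * (u (x + 1/(n:ℝ)) - u x)| + |g x|) :=
          ENNReal.ofReal_le_ofReal (abs_sub _ _)
      _ ≤ ENNReal.ofReal |(n:ℝ) * (u (x + 1/(n:ℝ)) - u x)| + ENNReal.ofReal |g x| :=
          ENNReal.ofReal_add_le
      _ ≤ A n x + G x := by
          apply add_le_add ?_ le_rfl
          rw [← hAof n x]
          exact ENNReal.ofReal_le_ofReal (habs n x)
  have hFm : ∀ n : ℕ, Measurable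
      (fun x => ENNReal.ofReal |(n:ℝ) * (u (x + 1/(n:ℝ)) - u x) - g x|) := fun n =>
    ENNReal.measurable_ofReal.comp ((hDm n).sub hg).abs
  have hAint : ∀ n : ℕ, 1 ≤ n → ∫⁻ x, A n x = ∫⁻ t, G t := by
    intro n hn
    have hc : (0:ℝ) < 1/(n:ℝ) := by positivity
    rw [hA]
    simp only
    rw [lintegral_const_mul _ (my_ioc_meas hGm _), my_ioc_total hGm hc, ← mul_assoc]
    have : (n : ℝ≥0∞) * ENNReal.ofReal (1/(n:ℝ)) = 1 := by
      rw [one_div, ENNReal.ofReal_inv_of_pos (by positivity), ENNReal.ofReal_natCast]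
      exact ENNReal.mul_inv_cancel
        (by exact_mod_cast Nat.one_le_iff_ne_zero.mp hn) (ENNReal.natCast_ne_top n)
    rw [this, one_mul]
  have hAint_le : ∀ n : ℕ, ∫⁻ x, A n x ≤ ∫⁻ t, G t := by
    intro n
    cases n with
    | zero => simp [hA]
    | succ m => exact (hAint (m+1) (Nat.succ_le_succ (Nat.zero_le m))).le
  have hGGfin : ∫⁻ x, (G x + G x) ≠ ⊤ := by
    rw [lintegral_add_left hGm]
    exact ENNReal.add_ne_top.2 ⟨hGfin, hGfin⟩
  have hmain : Tendsto
      (fun n : ℕ => ∫⁻ x, ENNReal.ofReal |(n:ℝ) * (u (x + 1/(n:ℝ)) - u x) - g x|)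
      atTop (nhds 0) := by
    apply my_gdct (bnd := fun n x => A n x + G x) (b := fun x => G x + G x)
      (fun n => (hFm n).aemeasurable) (fun n => ((hAm n).add hGm).aemeasurable)
      (fun n => ae_of_all _ fun x => hFle n x)
      (ae_of_all _ hFlim) ?_ ?_ hGGfin ?_
    · filter_upwards [hld] with x hx
      exact hx.add tendsto_const_nhds
    · exact ae_of_all _ fun x => ENNReal.add_ne_top.2 ⟨ENNReal.ofReal_ne_top, ENNReal.ofReal_ne_top⟩
    · have hev : ∀ᶠ n : ℕ in atTop, (∫⁻ x, (A n x + G x)) = ∫⁻ x, (G x + G x) := by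
        filter_upwards [eventually_ge_atTop 1] with n hn
        rw [lintegral_add_left (hAm n), lintegral_add_left hGm, hAint n hn]
      exact tendsto_const_nhds.congr' (by filter_upwards [hev] with n h using h.symm)
  -- conclusions
  have hres : ∀ n : ℕ, ∫ x in Ioc (0:ℝ) 1, |(n:ℝ) * (u (x + 1/(n:ℝ)) - u x) - g x|
      = (∫⁻ x in Ioc (0:ℝ) 1, ENNReal.ofReal |(n:ℝ) * (u (x + 1/(n:ℝ)) - u x) - g x|).toReal := by
    intro n
    rw [integral_eq_lintegral_of_nonneg_ae (f := fun x => |(n:ℝ) * (u (x + 1/(n:ℝ)) - u x) - g x|) (ae_of_all _ fun x => abs_nonneg _)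
      (((hDm n).sub hg).abs.aestronglyMeasurable)]
  constructor
  · intro n
    have hle1 : (∫⁻ x in Ioc (0:ℝ) 1, ENNReal.ofReal |(n:ℝ) * (u (x + 1/(n:ℝ)) - u x) - g x|)
        ≤ (∫⁻ t, G t) + ∫⁻ t, G t := by
      calc (∫⁻ x in Ioc (0:ℝ) 1, ENNReal.ofReal |(n:ℝ) * (u (x + 1/(n:ℝ)) - u x) - g x|)
          ≤ ∫⁻ x in Ioc (0:ℝ) 1, (A n x + G x) := lintegral_mono fun x => hFle n x
        _ ≤ ∫⁻ x, (A n x + G x) := setLIntegral_le_lintegral _ _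
        _ = (∫⁻ x, A n x) + ∫⁻ x, G x := lintegral_add_left (hAm n) _
        _ ≤ (∫⁻ t, G t) + ∫⁻ t, G t := add_le_add (hAint_le n) le_rfl
    rw [hres n]
    have h2fin : ((∫⁻ t, G t) + ∫⁻ t, G t) ≠ ⊤ := ENNReal.add_ne_top.2 ⟨hGfin, hGfin⟩
    calc (∫⁻ x in Ioc (0:ℝ) 1, ENNReal.ofReal |(n:ℝ) * (u (x + 1/(n:ℝ)) - u x) - g x|).toReal
        ≤ ((∫⁻ t, G t) + ∫⁻ t, G t).toReal := ENNReal.toReal_mono h2fin hle1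
      _ = 2 * ∫ x : ℝ, |g x| := by
          rw [ENNReal.toReal_add hGfin hGfin, ← hGofReal, ENNReal.toReal_ofReal
            (integral_nonneg fun x => abs_nonneg _)]
          ring
  · have h2 : Tendsto (fun n : ℕ =>
        ∫⁻ x in Ioc (0:ℝ) 1, ENNReal.ofReal |(n:ℝ) * (u (x + 1/(n:ℝ)) - u x) - g x|)
        atTop (nhds 0) := by
      apply tendsto_of_tendsto_of_tendsto_of_le_of_le tendsto_const_nhds hmain
        (fun n => zero_le) (fun n => setLIntegral_le_lintegral _ _)
    have h3 := (ENNReal.tendsto_toReal (by simp : (0:ℝ≥0∞) ≠ ⊤)).comp h2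
    simp only [ENNReal.toReal_zero] at h3
    apply h3.congr
    intro n
    exact (hres n).symm


/-- If `f` is bounded Borel on `K = [0,1]²`, vanishing outside `K`, and the classical partial
derivative `∂f/∂x₁` exists at every point of `K` and is integrable on `K`, then the `L¹`-norm of
the difference quotient minus the derivative tends to `0`. -/
theorem diff_quotient_x1_L1_tendsto (f f₁ : ℝ → ℝ → ℝ) (M : ℝ)
    (hmeas : Measurable (Function.uncurry f))
    (hbd : ∀ x₁ x₂ : ℝ, |f x₁ x₂| ≤ M)
    (hsupp : ∀ x₁ x₂ : ℝ, (x₁, x₂) ∉ Set.Icc (0 : ℝ) 1 ×ˢ Set.Icc (0 : ℝ) 1 → f x₁ x₂ = 0)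
    (hderiv : ∀ x₁ x₂ : ℝ, (x₁, x₂) ∈ Set.Icc (0 : ℝ) 1 ×ˢ Set.Icc (0 : ℝ) 1 →
      HasDerivAt (fun t => f t x₂) (f₁ x₁ x₂) x₁)
    (hint : IntegrableOn (Function.uncurry f₁) (Set.Icc (0 : ℝ) 1 ×ˢ Set.Icc (0 : ℝ) 1)) :
    Tendsto (fun n : ℕ =>
        ∫ x₁ in (0 : ℝ)..1, ∫ x₂ in (0 : ℝ)..1,
          |(n : ℝ) * (f (x₁ + 1 / n) x₂ - f x₁ x₂) - f₁ x₁ x₂|)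
      atTop (nhds 0) := by
  set K : Set (ℝ × ℝ) := Icc (0:ℝ) 1 ×ˢ Icc (0:ℝ) 1 with hKdef
  have hK : MeasurableSet K := measurableSet_Icc.prod measurableSet_Icc
  set F₁ : ℝ × ℝ → ℝ := K.indicator (Function.uncurry f₁) with hF₁def
  have hfm2 : ∀ c : ℝ, Measurable (fun p : ℝ × ℝ => f (p.1 + c) p.2) := fun c =>
    hmeas.comp ((measurable_fst.add_const c).prodMk measurable_snd)
  have hfm0 : Measurable (fun p : ℝ × ℝ => f p.1 p.2) :=
    hmeas.comp (measurable_fst.prodMk measurable_snd)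
  have hF₁m : Measurable F₁ := by
    have hqm : ∀ m : ℕ, Measurable (K.indicator
        (fun p : ℝ × ℝ => (m:ℝ) * (f (p.1 + 1/(m:ℝ)) p.2 - f p.1 p.2))) := fun m =>
      (measurable_const.mul ((hfm2 _).sub hfm0)).indicator hK
    apply measurable_of_tendsto_metrizable hqm
    rw [tendsto_pi_nhds]
    intro p
    by_cases hp : p ∈ K
    · have h1 : ∀ m : ℕ, K.indicator
          (fun p : ℝ × ℝ => (m:ℝ) * (f (p.1 + 1/(m:ℝ)) p.2 - f p.1 p.2)) p
          = (m:ℝ) * (f (p.1 + 1/(m:ℝ)) p.2 - f p.1 p.2) := fun m => indicator_of_mem hp _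
      simp_rw [h1, hF₁def, indicator_of_mem hp]
      have hd := hderiv p.1 p.2 (by simpa using hp)
      exact my_dq_tendsto hd
    · have h1 : ∀ m : ℕ, K.indicator
          (fun p : ℝ × ℝ => (m:ℝ) * (f (p.1 + 1/(m:ℝ)) p.2 - f p.1 p.2)) p = 0 :=
        fun m => indicator_of_notMem hp _
      simp_rw [h1, hF₁def, indicator_of_notMem hp]
      exact tendsto_const_nhds
  have hF₁i : Integrable F₁ volume := by
    rw [hF₁def, integrable_indicator_iff hK]
    exact hint
  have hvol : (volume : Measure (ℝ × ℝ)) = (volume : Measure ℝ).prod volume :=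
    Measure.volume_eq_prod ℝ ℝ
  have hswap : Integrable (F₁ ∘ Prod.swap) ((volume : Measure ℝ).prod volume) := by
    have h := hF₁i; rw [hvol] at h; exact h.swap
  have hslice_ae : ∀ᵐ x₂ : ℝ, Integrable (fun x₁ => F₁ (x₁, x₂)) volume := by
    filter_upwards [hswap.prod_right_ae] with x₂ hx₂
    simpa [Function.comp] using hx₂
  have hΨm : ∀ n : ℕ, Measurable
      (fun p : ℝ × ℝ => |(n:ℝ) * (f (p.1 + 1/(n:ℝ)) p.2 - f p.1 p.2) - F₁ p|) :=
    fun n => ((measurable_const.mul ((hfm2 _).sub hfm0)).sub hF₁m).abs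
  haveI hfin1 : IsFiniteMeasure (volume.restrict (Ioc (0:ℝ) 1)) :=
    ⟨by rw [Measure.restrict_apply_univ, Real.volume_Ioc]; exact ENNReal.ofReal_lt_top⟩
  have hM : (0:ℝ) ≤ M := le_trans (abs_nonneg _) (hbd 0 0)
  have hΨint : ∀ n : ℕ, Integrable
      (fun p : ℝ × ℝ => |(n:ℝ) * (f (p.1 + 1/(n:ℝ)) p.2 - f p.1 p.2) - F₁ p|)
      ((volume.restrict (Ioc (0:ℝ) 1)).prod (volume.restrict (Ioc (0:ℝ) 1))) := by
    intro n
    have hF₁r : Integrable F₁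
        ((volume.restrict (Ioc (0:ℝ) 1)).prod (volume.restrict (Ioc (0:ℝ) 1))) := by
      rw [Measure.prod_restrict, ← hvol]
      exact hF₁i.restrict
    apply Integrable.mono' ((integrable_const ((n:ℝ) * (2*M))).add hF₁r.abs)
      (hΨm n).aestronglyMeasurable
    apply ae_of_all
    intro p
    rw [Real.norm_eq_abs, abs_abs]
    calc |(n:ℝ) * (f (p.1 + 1/(n:ℝ)) p.2 - f p.1 p.2) - F₁ p|
        ≤ |(n:ℝ) * (f (p.1 + 1/(n:ℝ)) p.2 - f p.1 p.2)| + |F₁ p| := abs_sub _ _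
      _ ≤ (n:ℝ) * (2*M) + |F₁ p| := by
          apply add_le_add ?_ le_rfl
          rw [abs_mul, abs_of_nonneg (by positivity : (0:ℝ) ≤ (n:ℝ))]
          apply mul_le_mul_of_nonneg_left ?_ (by positivity)
          calc |f (p.1 + 1/(n:ℝ)) p.2 - f p.1 p.2|
              ≤ |f (p.1 + 1/(n:ℝ)) p.2| + |f p.1 p.2| := abs_sub _ _
            _ ≤ M + M := add_le_add (hbd _ _) (hbd _ _)
            _ = 2*M := by ring
  have e0 : ∀ n : ℕ, (∫ x₁ in (0:ℝ)..1, ∫ x₂ in (0:ℝ)..1,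
      |(n:ℝ) * (f (x₁ + 1/(n:ℝ)) x₂ - f x₁ x₂) - f₁ x₁ x₂|)
      = ∫ x₂ in Ioc (0:ℝ) 1, ∫ x₁ in Ioc (0:ℝ) 1,
        |(n:ℝ) * (f (x₁ + 1/(n:ℝ)) x₂ - f x₁ x₂) - F₁ (x₁, x₂)| := by
    intro n
    rw [intervalIntegral.integral_of_le zero_le_one]
    have e1 : ∀ x₁ : ℝ, (∫ x₂ in (0:ℝ)..1,
        |(n:ℝ) * (f (x₁ + 1/(n:ℝ)) x₂ - f x₁ x₂) - f₁ x₁ x₂|)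
        = ∫ x₂ in Ioc (0:ℝ) 1, |(n:ℝ) * (f (x₁ + 1/(n:ℝ)) x₂ - f x₁ x₂) - f₁ x₁ x₂| :=
      fun _ => intervalIntegral.integral_of_le zero_le_one
    simp_rw [e1]
    have e2 : (∫ x₁ in Ioc (0:ℝ) 1, ∫ x₂ in Ioc (0:ℝ) 1,
        |(n:ℝ) * (f (x₁ + 1/(n:ℝ)) x₂ - f x₁ x₂) - f₁ x₁ x₂|)
        = ∫ x₁ in Ioc (0:ℝ) 1, ∫ x₂ in Ioc (0:ℝ) 1,
          |(n:ℝ) * (f (x₁ + 1/(n:ℝ)) x₂ - f x₁ x₂) - F₁ (x₁, x₂)| := by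
      apply setIntegral_congr_fun measurableSet_Ioc
      intro x₁ hx₁
      apply setIntegral_congr_fun measurableSet_Ioc
      intro x₂ hx₂
      have hmemK : (x₁, x₂) ∈ K := ⟨Ioc_subset_Icc_self hx₁, Ioc_subset_Icc_self hx₂⟩
      simp only [hF₁def, indicator_of_mem hmemK, Function.uncurry_apply_pair]
    rw [e2]
    exact integral_integral_swap (hΨint n)
  set B : ℝ → ℝ := fun x₂ => 2 * ∫ x₁, |F₁ (x₁, x₂)| with hBdef
  have hBint : Integrable B (volume.restrict (Ioc (0:ℝ) 1)) := by
    have h1 := hswap.integral_norm_prod_left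
    have h2 : Integrable (fun x₂ => ∫ x₁, |F₁ (x₁, x₂)|) volume := by
      simpa [Function.comp, Real.norm_eq_abs] using h1
    exact h2.restrict.const_mul 2
  have hslice_all : ∀ᵐ x₂ ∂(volume.restrict (Ioc (0:ℝ) 1)),
      (∀ n : ℕ, ∫ x₁ in Ioc (0:ℝ) 1,
        |(n:ℝ) * (f (x₁ + 1/(n:ℝ)) x₂ - f x₁ x₂) - F₁ (x₁, x₂)| ≤ B x₂)
      ∧ Tendsto (fun n : ℕ => ∫ x₁ in Ioc (0:ℝ) 1,
          |(n:ℝ) * (f (x₁ + 1/(n:ℝ)) x₂ - f x₁ x₂) - F₁ (x₁, x₂)|) atTop (nhds 0) := by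
    filter_upwards [ae_restrict_mem measurableSet_Ioc, ae_restrict_of_ae hslice_ae]
      with x₂ hx₂ hgint
    have hx₂' : x₂ ∈ Icc (0:ℝ) 1 := Ioc_subset_Icc_self hx₂
    have hgm : Measurable (fun x₁ => F₁ (x₁, x₂)) :=
      hF₁m.comp (measurable_id.prodMk measurable_const)
    have hud : ∀ x : ℝ, HasDerivAt (fun t => f t x₂) (F₁ (x, x₂)) x := by
      intro x
      by_cases hx : x ∈ Icc (0:ℝ) 1
      · have hmemK : (x, x₂) ∈ K := ⟨hx, hx₂'⟩
        have hd := hderiv x x₂ hmemK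
        rw [hF₁def]
        rw [show (K.indicator (Function.uncurry f₁)) (x, x₂) = f₁ x x₂ from by
          rw [indicator_of_mem hmemK]; rfl]
        exact hd
      · have hnK : (x, x₂) ∉ K := fun h => hx h.1
        have hzero : (fun t => f t x₂) =ᶠ[nhds x] (fun _ => 0) := by
          have hopen : IsOpen (Icc (0:ℝ) 1)ᶜ := isClosed_Icc.isOpen_compl
          filter_upwards [hopen.mem_nhds hx] with t ht
          exact hsupp t x₂ (fun h => ht h.1)
        have h0 : HasDerivAt (fun t => f t x₂) 0 x :=
          HasDerivAt.congr_of_eventuallyEq (hasDerivAt_const x 0) hzero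
        rw [hF₁def]
        rw [show (K.indicator (Function.uncurry f₁)) (x, x₂) = 0 from
          indicator_of_notMem hnK _]
        exact h0
    have hs := my_slice hgm hgint hud
    exact ⟨fun n => hs.1 n, hs.2⟩
  have hDCT : Tendsto (fun n : ℕ => ∫ x₂ in Ioc (0:ℝ) 1, ∫ x₁ in Ioc (0:ℝ) 1,
      |(n:ℝ) * (f (x₁ + 1/(n:ℝ)) x₂ - f x₁ x₂) - F₁ (x₁, x₂)|) atTop (nhds 0) := by
    have h := tendsto_integral_filter_of_dominated_convergence
      (μ := volume.restrict (Ioc (0:ℝ) 1))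
      (F := fun (n : ℕ) x₂ => ∫ x₁ in Ioc (0:ℝ) 1,
        |(n:ℝ) * (f (x₁ + 1/(n:ℝ)) x₂ - f x₁ x₂) - F₁ (x₁, x₂)|)
      (f := fun _ => (0:ℝ)) B
      (by
        apply Eventually.of_forall
        intro n
        exact ((hΨm n).stronglyMeasurable.integral_prod_left'
          (μ := volume.restrict (Ioc (0:ℝ) 1))).aestronglyMeasurable)
      (by
        apply Eventually.of_forall
        intro n
        filter_upwards [hslice_all] with x₂ hx₂
        rw [Real.norm_eq_abs, abs_of_nonneg (integral_nonneg fun x₁ => abs_nonneg _)]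
        exact hx₂.1 n)
      hBint
      (by
        filter_upwards [hslice_all] with x₂ hx₂
        exact hx₂.2)
    simpa using h
  exact hDCT.congr fun n => (e0 n).symm
end

section
/- Suppose f : ℝ² → ℝ bounded Borel on K = [0,1]² (extended by 0) has classical partial derivatives f_{x₁}, f_{x₂} everywhere on K in L¹(K), and both classical mixed second derivatives f_{x₁x₂} = ∂/∂x₁(∂f/∂x₂) and f_{x₂x₁} = ∂/∂x₂(∂f/∂x₁) exist everywhere on K and lie in L¹(K). Then f_{x₁x₂}(x₁,x₂) = f_{x₂x₁}(x₁,x₂) for Lebesgue-almost every (x₁,x₂) ∈ K. -/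
open MeasureTheory Filter Set

open Topology in
lemma mpae_dense (S : Set ℝ) (hS : ∀ᵐ x ∂(volume.restrict (Icc (0:ℝ) 1)), x ∈ S) :
    Icc (0:ℝ) 1 ⊆ closure S := by
  intro x hx
  rw [mem_closure_iff]
  intro U hU hxU
  rcases Metric.isOpen_iff.1 hU x hxU with ⟨ε, hε, hball⟩
  by_contra hne
  push_neg at hne
  set l : ℝ := max (x - ε/2) 0 with hl
  set r : ℝ := min (x + ε/2) 1 with hr
  have hlx : l ≤ x := max_le (by linarith) hx.1
  have hlr : l < r := by
    rcases lt_or_eq_of_le hx.2 with h1 | h1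
    · exact lt_of_le_of_lt hlx (lt_min (by linarith) h1)
    · have : r = 1 := by rw [hr, h1]; exact min_eq_right (by linarith)
      rw [this, hl, h1]
      exact max_lt (by linarith) one_pos
  have hsub : Ioo l r ⊆ Icc (0:ℝ) 1 ∩ Metric.ball x ε := by
    intro t ht
    refine ⟨⟨le_of_lt (lt_of_le_of_lt (le_max_right _ _) ht.1),
      le_of_lt (lt_of_lt_of_le ht.2 (min_le_right _ _))⟩, ?_⟩
    rw [Real.ball_eq_Ioo]
    constructor
    · have := lt_of_le_of_lt (le_max_left _ _) ht.1; linarith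
    · have := lt_of_lt_of_le ht.2 (min_le_left _ _); linarith
  have hzero : volume.restrict (Icc (0:ℝ) 1) Sᶜ = 0 := by
    rwa [ae_iff] at hS
  have hsub2 : Ioo l r ⊆ Sᶜ := fun t ht => by
    intro htS
    have : t ∈ U ∩ S := ⟨hball ((hsub ht).2), htS⟩
    rw [hne] at this
    exact this
  have h1 : volume.restrict (Icc (0:ℝ) 1) (Ioo l r) = 0 :=
    measure_mono_null hsub2 hzero
  rw [Measure.restrict_apply measurableSet_Ioo,
    inter_eq_self_of_subset_left (fun t ht => (hsub ht).1), Real.volume_Ioo] at h1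
  exact absurd h1 (by simp; linarith)

open Topology in
lemma mpae_key1D (h : ℝ → ℝ) (hint : Integrable h volume)
    (hsupp : ∀ x : ℝ, x ∉ Icc (0:ℝ) 1 → h x = 0)
    (c₀ : ℝ) (S : Set ℝ) (hS : Icc (0:ℝ) 1 ⊆ closure S)
    (hzero : ∀ d ∈ S, ∫ t in c₀..d, h t = 0) :
    ∀ᵐ t : ℝ, h t = 0 := by
  have hii : ∀ a b : ℝ, IntervalIntegrable h volume a b := fun a b => hint.intervalIntegrable
  have hFcont : Continuous (fun b => ∫ t in c₀..b, h t) :=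
    intervalIntegral.continuous_primitive hii c₀
  have hclosed : closure S ⊆ {b | (∫ t in c₀..b, h t) = 0} :=
    (isClosed_eq hFcont continuous_const).closure_subset_iff.2 fun x hx => hzero x hx
  have h01 : ∀ b ∈ Icc (0:ℝ) 1, (∫ t in c₀..b, h t) = 0 := fun b hb => hclosed (hS hb)
  have hne0 : ∀ᵐ t : ℝ, t ≠ (0:ℝ) := by
    rw [ae_iff]; simpa using measure_singleton (0:ℝ)
  have hall : ∀ b : ℝ, (∫ t in c₀..b, h t) = 0 := by
    intro b
    rcases le_total b 0 with hb | hb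
    · have hadd := intervalIntegral.integral_add_adjacent_intervals (hii c₀ 0) (hii 0 b)
      have hz : ∫ t in (0:ℝ)..b, h t = ∫ t in (0:ℝ)..b, (0:ℝ) := by
        refine intervalIntegral.integral_congr_ae ?_
        filter_upwards [hne0] with t ht hmem
        rw [uIoc_comm, uIoc_of_le hb] at hmem
        exact hsupp t (fun hIcc => ht (le_antisymm hmem.2 hIcc.1))
      simp only [intervalIntegral.integral_zero] at hz
      have := h01 0 ⟨le_refl _, zero_le_one⟩
      linarith
    · rcases le_total 1 b with hb1 | hb1
      · have hadd := intervalIntegral.integral_add_adjacent_intervals (hii c₀ 1) (hii 1 b)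
        have hz : ∫ t in (1:ℝ)..b, h t = ∫ t in (1:ℝ)..b, (0:ℝ) := by
          refine intervalIntegral.integral_congr_ae ?_
          filter_upwards with t hmem
          rw [uIoc_of_le hb1] at hmem
          exact hsupp t (fun hIcc => absurd hIcc.2 (not_le.2 hmem.1))
        simp only [intervalIntegral.integral_zero] at hz
        have := h01 1 ⟨zero_le_one, le_refl _⟩
        linarith
      · exact h01 b ⟨hb, hb1⟩
  have hT : ∀ x r : ℝ, 0 < r → (⨍ y in Metric.closedBall x r, h y) = 0 := by
    intro x r hr
    have hball : ∫ y in Metric.closedBall x r, h y = 0 := by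
      rw [Real.closedBall_eq_Icc, MeasureTheory.integral_Icc_eq_integral_Ioc,
        ← intervalIntegral.integral_of_le (by linarith : x - r ≤ x + r)]
      have hadd := intervalIntegral.integral_add_adjacent_intervals
        (hii c₀ (x - r)) (hii (x - r) (x + r))
      have h1 := hall (x - r); have h2 := hall (x + r)
      linarith
    rw [setAverage_eq, hball, smul_zero]
  filter_upwards [IsUnifLocDoublingMeasure.ae_tendsto_average (volume : Measure ℝ)
    (hint.locallyIntegrable) 1] with x hx
  have h1 : Tendsto (fun r : ℝ => ⨍ y in Metric.closedBall x r, h y) (𝓝[>] 0) (𝓝 (h x)) := by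
    refine hx (fun _ : ℝ => x) (fun r => r) tendsto_id ?_
    filter_upwards [self_mem_nhdsWithin] with r hr
    exact Metric.mem_closedBall_self (by simp at hr ⊢; linarith)
  have h2 : Tendsto (fun r : ℝ => ⨍ y in Metric.closedBall x r, h y) (𝓝[>] 0) (𝓝 0) := by
    refine Tendsto.congr' ?_ tendsto_const_nhds
    filter_upwards [self_mem_nhdsWithin] with r hr
    exact (hT x r hr).symm
  exact tendsto_nhds_unique h1 h2

/-- If `f` is bounded Borel on `K = [0,1]²` (vanishing outside `K`), both classical first
partial derivatives exist everywhere on `K` and lie in `L¹(K)`, and both classical mixed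
second derivatives `f_{x₁x₂} = ∂/∂x₁(∂f/∂x₂)` and `f_{x₂x₁} = ∂/∂x₂(∂f/∂x₁)` exist
everywhere on `K` and lie in `L¹(K)`, then the two mixed derivatives agree almost everywhere
on `K`. -/
theorem mixed_partials_ae_eq (f f₁ f₂ f₁₂ f₂₁ : ℝ → ℝ → ℝ) (M : ℝ)
    (hmeas : Measurable (Function.uncurry f))
    (hbd : ∀ x₁ x₂ : ℝ, |f x₁ x₂| ≤ M)
    (hsupp : ∀ x₁ x₂ : ℝ, (x₁, x₂) ∉ Set.Icc (0 : ℝ) 1 ×ˢ Set.Icc (0 : ℝ) 1 → f x₁ x₂ = 0)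
    (hd1 : ∀ x₁ x₂ : ℝ, (x₁, x₂) ∈ Set.Icc (0 : ℝ) 1 ×ˢ Set.Icc (0 : ℝ) 1 →
      HasDerivAt (fun t => f t x₂) (f₁ x₁ x₂) x₁)
    (hint1 : IntegrableOn (Function.uncurry f₁) (Set.Icc (0 : ℝ) 1 ×ˢ Set.Icc (0 : ℝ) 1))
    (hd2 : ∀ x₁ x₂ : ℝ, (x₁, x₂) ∈ Set.Icc (0 : ℝ) 1 ×ˢ Set.Icc (0 : ℝ) 1 →
      HasDerivAt (fun t => f x₁ t) (f₂ x₁ x₂) x₂)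
    (hint2 : IntegrableOn (Function.uncurry f₂) (Set.Icc (0 : ℝ) 1 ×ˢ Set.Icc (0 : ℝ) 1))
    (hd12 : ∀ x₁ x₂ : ℝ, (x₁, x₂) ∈ Set.Icc (0 : ℝ) 1 ×ˢ Set.Icc (0 : ℝ) 1 →
      HasDerivAt (fun t => f₂ t x₂) (f₁₂ x₁ x₂) x₁)
    (hint12 : IntegrableOn (Function.uncurry f₁₂) (Set.Icc (0 : ℝ) 1 ×ˢ Set.Icc (0 : ℝ) 1))
    (hd21 : ∀ x₁ x₂ : ℝ, (x₁, x₂) ∈ Set.Icc (0 : ℝ) 1 ×ˢ Set.Icc (0 : ℝ) 1 →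
      HasDerivAt (fun t => f₁ x₁ t) (f₂₁ x₁ x₂) x₂)
    (hint21 : IntegrableOn (Function.uncurry f₂₁) (Set.Icc (0 : ℝ) 1 ×ˢ Set.Icc (0 : ℝ) 1)) :
    ∀ᵐ p ∂(volume.restrict (Set.Icc (0 : ℝ) 1 ×ˢ Set.Icc (0 : ℝ) 1) :
        Measure (ℝ × ℝ)), f₁₂ p.1 p.2 = f₂₁ p.1 p.2 := by
  classical
  set μ : Measure ℝ := volume.restrict (Icc (0:ℝ) 1) with hμ
  have hprod : (volume : Measure (ℝ × ℝ)).restrict (Icc (0:ℝ) 1 ×ˢ Icc (0:ℝ) 1) = μ.prod μ := by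
    rw [hμ, Measure.prod_restrict, ← Measure.volume_eq_prod]
  have hg1 : Integrable (Function.uncurry f₁) (μ.prod μ) := by rw [← hprod]; exact hint1
  have hg2 : Integrable (Function.uncurry f₂) (μ.prod μ) := by rw [← hprod]; exact hint2
  have hg12 : Integrable (Function.uncurry f₁₂) (μ.prod μ) := by rw [← hprod]; exact hint12
  have hg21 : Integrable (Function.uncurry f₂₁) (μ.prod μ) := by rw [← hprod]; exact hint21
  set g : ℝ → ℝ → ℝ := fun x y => f₁₂ x y - f₂₁ x y with hgdef
  have hgg : Integrable (Function.uncurry g) (μ.prod μ) := hg12.sub hg21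
  -- subset helpers
  have huIoc : ∀ {a b : ℝ}, a ∈ Icc (0:ℝ) 1 → b ∈ Icc (0:ℝ) 1 → Set.uIoc a b ⊆ Icc (0:ℝ) 1 :=
    fun ha hb => Set.uIoc_subset_uIcc.trans (Set.uIcc_subset_Icc ha hb)
  have huIcc : ∀ {a b : ℝ}, a ∈ Icc (0:ℝ) 1 → b ∈ Icc (0:ℝ) 1 → uIcc a b ⊆ Icc (0:ℝ) 1 :=
    fun ha hb => Set.uIcc_subset_Icc ha hb
  have hII : ∀ {h : ℝ → ℝ} {a b : ℝ}, Integrable h μ → a ∈ Icc (0:ℝ) 1 → b ∈ Icc (0:ℝ) 1 →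
      IntervalIntegrable h volume a b := by
    intro h a b hh ha hb
    rw [intervalIntegrable_iff]
    exact IntegrableOn.mono_set hh (huIoc ha hb)
  have hconv : ∀ {a b : ℝ} {p : ℝ → Prop}, a ∈ Icc (0:ℝ) 1 → b ∈ Icc (0:ℝ) 1 →
      (∀ᵐ x ∂μ, p x) → ∀ᵐ x ∂(volume : Measure ℝ), x ∈ Set.uIoc a b → p x := by
    intro a b p ha hb hp
    exact (ae_restrict_iff' measurableSet_uIoc).1
      (ae_restrict_of_ae_restrict_of_subset (huIoc ha hb) hp)
  -- slice integrability
  have hsl2x : ∀ᵐ x ∂μ, Integrable (fun y => f₂ x y) μ := hg2.prod_right_ae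
  have hsl21x : ∀ᵐ x ∂μ, Integrable (fun y => f₂₁ x y) μ := hg21.prod_right_ae
  have hsl12x : ∀ᵐ x ∂μ, Integrable (fun y => f₁₂ x y) μ := hg12.prod_right_ae
  have hslgx : ∀ᵐ x ∂μ, Integrable (fun y => g x y) μ := hgg.prod_right_ae
  have hsl1y : ∀ᵐ y ∂μ, Integrable (fun x => f₁ x y) μ := hg1.prod_left_ae
  have hsl12y : ∀ᵐ y ∂μ, Integrable (fun x => f₁₂ x y) μ := hg12.prod_left_ae
  have hIccae : ∀ᵐ x ∂μ, x ∈ Icc (0:ℝ) 1 := ae_restrict_mem measurableSet_Icc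
  -- good sets
  set G₁ : Set ℝ := {x | x ∈ Icc (0:ℝ) 1 ∧ Integrable (fun y => f₂ x y) μ ∧
    Integrable (fun y => f₂₁ x y) μ ∧ Integrable (fun y => f₁₂ x y) μ ∧
    Integrable (fun y => g x y) μ} with hG₁def
  set G₂ : Set ℝ := {y | y ∈ Icc (0:ℝ) 1 ∧ Integrable (fun x => f₁ x y) μ ∧
    Integrable (fun x => f₁₂ x y) μ} with hG₂def
  have hG₁ae : ∀ᵐ x ∂μ, x ∈ G₁ := by
    filter_upwards [hIccae, hsl2x, hsl21x, hsl12x, hslgx] with x h1 h2 h3 h4 h5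
    exact ⟨h1, h2, h3, h4, h5⟩
  have hG₂ae : ∀ᵐ y ∂μ, y ∈ G₂ := by
    filter_upwards [hIccae, hsl1y, hsl12y] with y h1 h2 h3
    exact ⟨h1, h2, h3⟩
  -- FTC helpers
  have hFTC2 : ∀ {x c d : ℝ}, x ∈ Icc (0:ℝ) 1 → c ∈ Icc (0:ℝ) 1 → d ∈ Icc (0:ℝ) 1 →
      Integrable (fun y => f₂ x y) μ → (∫ y in c..d, f₂ x y) = f x d - f x c := by
    intro x c d hx hc hd hsl
    exact intervalIntegral.integral_eq_sub_of_hasDerivAt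
      (fun y hy => hd2 x y ⟨hx, huIcc hc hd hy⟩) (hII hsl hc hd)
  have hFTC21 : ∀ {x c d : ℝ}, x ∈ Icc (0:ℝ) 1 → c ∈ Icc (0:ℝ) 1 → d ∈ Icc (0:ℝ) 1 →
      Integrable (fun y => f₂₁ x y) μ → (∫ y in c..d, f₂₁ x y) = f₁ x d - f₁ x c := by
    intro x c d hx hc hd hsl
    exact intervalIntegral.integral_eq_sub_of_hasDerivAt
      (fun y hy => hd21 x y ⟨hx, huIcc hc hd hy⟩) (hII hsl hc hd)
  have hFTC12 : ∀ {y a b : ℝ}, y ∈ Icc (0:ℝ) 1 → a ∈ Icc (0:ℝ) 1 → b ∈ Icc (0:ℝ) 1 →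
      Integrable (fun x => f₁₂ x y) μ → (∫ x in a..b, f₁₂ x y) = f₂ b y - f₂ a y := by
    intro y a b hy ha hb hsl
    exact intervalIntegral.integral_eq_sub_of_hasDerivAt
      (fun x hx => hd12 x y ⟨huIcc ha hb hx, hy⟩) (hII hsl ha hb)
  have hFTC1 : ∀ {y a b : ℝ}, y ∈ Icc (0:ℝ) 1 → a ∈ Icc (0:ℝ) 1 → b ∈ Icc (0:ℝ) 1 →
      Integrable (fun x => f₁ x y) μ → (∫ x in a..b, f₁ x y) = f b y - f a y := by
    intro y a b hy ha hb hsl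
    exact intervalIntegral.integral_eq_sub_of_hasDerivAt
      (fun x hx => hd1 x y ⟨huIcc ha hb hx, hy⟩) (hII hsl ha hb)
  -- partial integral integrability
  have hPIcore : ∀ {F : ℝ → ℝ → ℝ}, Integrable (Function.uncurry F) (μ.prod μ) →
      ∀ {c d : ℝ}, c ∈ Icc (0:ℝ) 1 → d ∈ Icc (0:ℝ) 1 →
      Integrable (fun x => ∫ y in Ioc c d, F x y) μ := by
    intro F hF c d hc hd
    have h1 : μ.restrict (Ioc c d) = volume.restrict (Ioc c d) := by
      rw [hμ, Measure.restrict_restrict measurableSet_Ioc,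
        inter_eq_self_of_subset_left (subset_trans Ioc_subset_Icc_self (Icc_subset_Icc hc.1 hd.2))]
    have h2 : μ.prod (μ.restrict (Ioc c d)) = (μ.prod μ).restrict (univ ×ˢ Ioc c d) := by
      rw [← Measure.prod_restrict, Measure.restrict_univ]
    have h3 : Integrable (Function.uncurry F) (μ.prod (volume.restrict (Ioc c d))) := by
      rw [← h1, h2]; exact hF.restrict
    exact h3.integral_prod_left
  have hPI : ∀ {F : ℝ → ℝ → ℝ}, Integrable (Function.uncurry F) (μ.prod μ) →
      ∀ {c d : ℝ}, c ∈ Icc (0:ℝ) 1 → d ∈ Icc (0:ℝ) 1 →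
      Integrable (fun x => ∫ y in c..d, F x y) μ := by
    intro F hF c d hc hd
    rcases le_total c d with hcd | hcd
    · simp only [intervalIntegral.integral_of_le hcd]; exact hPIcore hF hc hd
    · simp only [intervalIntegral.integral_of_ge hcd]; exact (hPIcore hF hd hc).neg
  -- swap
  have hSWcore : ∀ {F : ℝ → ℝ → ℝ}, Integrable (Function.uncurry F) (μ.prod μ) →
      ∀ {a b c d : ℝ}, a ≤ b → c ≤ d → a ∈ Icc (0:ℝ) 1 → b ∈ Icc (0:ℝ) 1 →
      c ∈ Icc (0:ℝ) 1 → d ∈ Icc (0:ℝ) 1 →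
      (∫ x in a..b, ∫ y in c..d, F x y) = ∫ y in c..d, ∫ x in a..b, F x y := by
    intro F hF a b c d hab hcd ha hb hc hd
    have e1 : μ.restrict (Ioc a b) = volume.restrict (Ioc a b) := by
      rw [hμ, Measure.restrict_restrict measurableSet_Ioc,
        inter_eq_self_of_subset_left (subset_trans Ioc_subset_Icc_self (Icc_subset_Icc ha.1 hb.2))]
    have e2 : μ.restrict (Ioc c d) = volume.restrict (Ioc c d) := by
      rw [hμ, Measure.restrict_restrict measurableSet_Ioc,
        inter_eq_self_of_subset_left (subset_trans Ioc_subset_Icc_self (Icc_subset_Icc hc.1 hd.2))]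
    have h3 : Integrable (Function.uncurry F)
        ((volume.restrict (Ioc a b)).prod (volume.restrict (Ioc c d))) := by
      rw [← e1, ← e2, Measure.prod_restrict]; exact hF.restrict
    have hsw := MeasureTheory.integral_integral_swap h3
    simp only [intervalIntegral.integral_of_le hab, intervalIntegral.integral_of_le hcd]
    exact hsw
  have hSW : ∀ {F : ℝ → ℝ → ℝ}, Integrable (Function.uncurry F) (μ.prod μ) →
      ∀ {a b c d : ℝ}, a ∈ Icc (0:ℝ) 1 → b ∈ Icc (0:ℝ) 1 → c ∈ Icc (0:ℝ) 1 → d ∈ Icc (0:ℝ) 1 →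
      (∫ x in a..b, ∫ y in c..d, F x y) = ∫ y in c..d, ∫ x in a..b, F x y := by
    intro F hF a b c d ha hb hc hd
    rcases le_total a b with hab | hab <;> rcases le_total c d with hcd | hcd
    · exact hSWcore hF hab hcd ha hb hc hd
    · simp only [intervalIntegral.integral_symm d c, intervalIntegral.integral_neg, neg_inj]
      exact hSWcore hF hab hcd ha hb hd hc
    · simp only [intervalIntegral.integral_symm b a, intervalIntegral.integral_neg, neg_inj]
      exact hSWcore hF hab hcd hb ha hc hd
    · simp only [intervalIntegral.integral_symm b a, intervalIntegral.integral_symm d c,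
        intervalIntegral.integral_neg, neg_neg, neg_inj]
      exact hSWcore hF hab hcd hb ha hd hc
  -- rectangle identity
  have hRect : ∀ {a b c d : ℝ}, a ∈ G₁ → b ∈ G₁ → c ∈ G₂ → d ∈ G₂ →
      (∫ x in a..b, ∫ y in c..d, g x y) = 0 := by
    intro a b c d haG hbG hcG hdG
    obtain ⟨ha, haf2, haf21, haf12, hag⟩ := haG
    obtain ⟨hb, hbf2, hbf21, hbf12, hbg⟩ := hbG
    obtain ⟨hc, hcf1, hcf12⟩ := hcG
    obtain ⟨hd, hdf1, hdf12⟩ := hdG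
    have h12 : (∫ x in a..b, ∫ y in c..d, f₁₂ x y) = f b d - f b c - (f a d - f a c) := by
      rw [hSW hg12 ha hb hc hd]
      have e1 : (∫ y in c..d, ∫ x in a..b, f₁₂ x y) = ∫ y in c..d, (f₂ b y - f₂ a y) := by
        refine intervalIntegral.integral_congr_ae ?_
        have hae : ∀ᵐ y ∂μ, y ∈ Icc (0:ℝ) 1 ∧ Integrable (fun x => f₁₂ x y) μ :=
          hIccae.and hsl12y
        filter_upwards [hconv hc hd hae] with y hy hmem
        exact hFTC12 (hy hmem).1 ha hb (hy hmem).2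
      rw [e1, intervalIntegral.integral_sub (hII hbf2 hc hd) (hII haf2 hc hd),
        hFTC2 hb hc hd hbf2, hFTC2 ha hc hd haf2]
    have h21 : (∫ x in a..b, ∫ y in c..d, f₂₁ x y) = f b d - f b c - (f a d - f a c) := by
      have e1 : (∫ x in a..b, ∫ y in c..d, f₂₁ x y) = ∫ x in a..b, (f₁ x d - f₁ x c) := by
        refine intervalIntegral.integral_congr_ae ?_
        have hae : ∀ᵐ x ∂μ, x ∈ Icc (0:ℝ) 1 ∧ Integrable (fun y => f₂₁ x y) μ :=
          hIccae.and hsl21x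
        filter_upwards [hconv ha hb hae] with x hx hmem
        exact hFTC21 (hx hmem).1 hc hd (hx hmem).2
      rw [e1, intervalIntegral.integral_sub (hII hdf1 ha hb) (hII hcf1 ha hb),
        hFTC1 hd ha hb hdf1, hFTC1 hc ha hb hcf1]
      ring
    have hsplitIn : ∀ᵐ x ∂(volume : Measure ℝ), x ∈ Set.uIoc a b →
        (∫ y in c..d, g x y) = (∫ y in c..d, f₁₂ x y) - ∫ y in c..d, f₂₁ x y := by
      refine hconv ha hb ?_
      filter_upwards [hsl12x, hsl21x] with x h1 h2
      exact intervalIntegral.integral_sub (hII h1 hc hd) (hII h2 hc hd)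
    rw [intervalIntegral.integral_congr_ae hsplitIn,
      intervalIntegral.integral_sub (hII (hPI hg12 hc hd) ha hb) (hII (hPI hg21 hc hd) ha hb),
      h12, h21, sub_self]
  -- pick base points
  have hμne : μ ≠ 0 := by
    intro h0
    have h1 : μ univ = 1 := by
      rw [hμ, Measure.restrict_apply_univ, Real.volume_Icc]
      norm_num
    rw [h0] at h1; simp at h1
  have : (ae μ).NeBot := ae_neBot.2 hμne
  obtain ⟨a₀, ha₀⟩ := hG₁ae.exists
  obtain ⟨c₀, hc₀⟩ := hG₂ae.exists
  have hdense₁ : Icc (0:ℝ) 1 ⊆ closure G₁ := mpae_dense _ hG₁ae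
  have hdense₂ : Icc (0:ℝ) 1 ⊆ closure G₂ := mpae_dense _ hG₂ae
  obtain ⟨D, hDsub, hDcount, hDdense⟩ :=
    (TopologicalSpace.IsSeparable.of_separableSpace G₂).exists_countable_dense_subset
  have hDdense' : Icc (0:ℝ) 1 ⊆ closure D :=
    hdense₂.trans (closure_minimal hDdense isClosed_closure)
  -- for each good d, the partial primitive vanishes a.e.
  have hΦ : ∀ d ∈ G₂, ∀ᵐ x ∂μ, (∫ y in c₀..d, g x y) = 0 := by
    intro d hdG
    have hΦint : Integrable (fun x => ∫ y in c₀..d, g x y) μ := hPI hgg hc₀.1 hdG.1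
    have hinth : Integrable ((Icc (0:ℝ) 1).indicator (fun x => ∫ y in c₀..d, g x y)) volume := by
      rw [integrable_indicator_iff measurableSet_Icc]; exact hΦint
    have hzero : ∀ b ∈ G₁,
        ∫ t in a₀..b, (Icc (0:ℝ) 1).indicator (fun x => ∫ y in c₀..d, g x y) t = 0 := by
      intro b hbG
      have e : ∫ t in a₀..b, (Icc (0:ℝ) 1).indicator (fun x => ∫ y in c₀..d, g x y) t
          = ∫ t in a₀..b, ∫ y in c₀..d, g t y :=
        intervalIntegral.integral_congr (fun t ht => indicator_of_mem (huIcc ha₀.1 hbG.1 ht) _)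
      rw [e]
      exact hRect ha₀ hbG hc₀ hdG
    have hae := mpae_key1D _ hinth (fun x hx => indicator_of_notMem hx _) a₀ G₁ hdense₁ hzero
    have h2 : ∀ᵐ x ∂μ, (Icc (0:ℝ) 1).indicator (fun x => ∫ y in c₀..d, g x y) x = 0 :=
      ae_restrict_of_ae hae
    filter_upwards [h2, hIccae] with x hx1 hx2
    rw [← indicator_of_mem hx2 (fun x => ∫ y in c₀..d, g x y)]
    exact hx1
  have hallD : ∀ᵐ x ∂μ, ∀ d ∈ D, (∫ y in c₀..d, g x y) = 0 :=
    (ae_ball_iff hDcount).2 fun d hd => hΦ d (hDsub hd)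
  -- slicewise conclusion
  have hslice : ∀ᵐ x ∂μ, ∀ᵐ y ∂μ, g x y = 0 := by
    filter_upwards [hallD, hslgx] with x hx hgx
    have hinth : Integrable ((Icc (0:ℝ) 1).indicator (fun y => g x y)) volume := by
      rw [integrable_indicator_iff measurableSet_Icc]; exact hgx
    have hzero : ∀ dd ∈ D, ∫ t in c₀..dd, (Icc (0:ℝ) 1).indicator (fun y => g x y) t = 0 := by
      intro dd hdd
      have e : ∫ t in c₀..dd, (Icc (0:ℝ) 1).indicator (fun y => g x y) t
          = ∫ t in c₀..dd, g x t :=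
        intervalIntegral.integral_congr
          (fun t ht => indicator_of_mem (huIcc hc₀.1 (hDsub hdd).1 ht) _)
      rw [e]; exact hx dd hdd
    have hae := mpae_key1D _ hinth (fun y hy => indicator_of_notMem hy _) c₀ D hDdense' hzero
    have h2 : ∀ᵐ y ∂μ, (Icc (0:ℝ) 1).indicator (fun y => g x y) y = 0 :=
      ae_restrict_of_ae hae
    filter_upwards [h2, hIccae] with y hy1 hy2
    rw [← indicator_of_mem hy2 (fun y => g x y)]
    exact hy1
  -- assemble on the product
  have hmkA := hgg.aestronglyMeasurable
  set G' : ℝ × ℝ → ℝ := hmkA.mk (Function.uncurry g) with hG'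
  have hmeasG' : StronglyMeasurable G' := hmkA.stronglyMeasurable_mk
  have heq : Function.uncurry g =ᵐ[μ.prod μ] G' := hmkA.ae_eq_mk
  have h1 : ∀ᵐ x ∂μ, ∀ᵐ y ∂μ, g x y = G' (x, y) := Measure.ae_ae_of_ae_prod heq
  have h2 : ∀ᵐ x ∂μ, ∀ᵐ y ∂μ, G' (x, y) = 0 := by
    filter_upwards [hslice, h1] with x hx1 hx2
    filter_upwards [hx1, hx2] with y hy1 hy2
    rw [← hy2]; exact hy1
  have hs : MeasurableSet {p : ℝ × ℝ | ¬ G' p = 0} :=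
    (measurableSet_singleton (0:ℝ)).compl.preimage hmeasG'.measurable
  have hnull : (μ.prod μ) {p : ℝ × ℝ | ¬ G' p = 0} = 0 := by
    rw [Measure.measure_prod_null hs]
    filter_upwards [h2] with x hx
    exact ae_iff.1 hx
  have hfinal : ∀ᵐ p ∂(μ.prod μ), G' p = 0 := by
    rw [ae_iff]; exact hnull
  rw [show (volume.restrict (Set.Icc (0 : ℝ) 1 ×ˢ Set.Icc (0 : ℝ) 1) : Measure (ℝ × ℝ))
    = μ.prod μ from hprod]
  filter_upwards [hfinal, heq] with p hp1 hp2
  have : g p.1 p.2 = 0 := by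
    have := hp2.trans hp1
    exact this
  exact sub_eq_zero.mp this
end

section
/- For the two-variable Bernstein polynomial B_n(f,x₁,x₂) = Σ_{k₁,k₂=0}^n f(k₁/n, k₂/n) C(n,k₁)C(n,k₂) x₁^{k₁}(1−x₁)^{n−k₁} x₂^{k₂}(1−x₂)^{n−k₂}: if f : ℝ² → ℝ has a continuous mixed partial derivative ∂²f/∂x₁∂x₂ on ℝ², then ∂²B_n(f,·,·)/∂x₁∂x₂ converges to ∂²f/∂x₁∂x₂ uniformly on [0,1]² as n → ∞. -/
open MeasureTheory Filter Set

/-- The tensor-product Bernstein polynomial of `f` of degree `n` in each variable. -/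
noncomputable def bernstein2d (f : ℝ → ℝ → ℝ) (n : ℕ) (x₁ x₂ : ℝ) : ℝ :=
  ∑ k₁ ∈ Finset.range (n + 1), ∑ k₂ ∈ Finset.range (n + 1),
    f ((k₁ : ℝ) / n) ((k₂ : ℝ) / n) * (n.choose k₁ : ℝ) * (n.choose k₂ : ℝ) *
      x₁ ^ k₁ * (1 - x₁) ^ (n - k₁) * x₂ ^ k₂ * (1 - x₂) ^ (n - k₂)

noncomputable def bpoly (m k : ℕ) (y : ℝ) : ℝ := (m.choose k : ℝ) * y ^ k * (1 - y) ^ (m - k)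

lemma bpoly_nonneg {m k : ℕ} {y : ℝ} (h0 : 0 ≤ y) (h1 : y ≤ 1) : 0 ≤ bpoly m k y := by
  have : (0:ℝ) ≤ 1 - y := by linarith
  unfold bpoly; positivity

lemma bpoly_sum (m : ℕ) {y : ℝ} (hy : y ∈ Icc (0:ℝ) 1) :
    ∑ k ∈ Finset.range (m+1), bpoly m k y = 1 := by
  have := bernstein.probability m ⟨y, hy⟩
  rw [← Fin.sum_univ_eq_sum_range (fun k => bpoly m k y)]
  rw [← this]
  apply Finset.sum_congr rfl
  intro k _
  simp [bpoly, bernstein_apply]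

lemma bpoly_variance (m : ℕ) (hm : 0 < m) {y : ℝ} (hy : y ∈ Icc (0:ℝ) 1) :
    ∑ k ∈ Finset.range (m+1), (y - k/m)^2 * bpoly m k y = y*(1-y)/m := by
  have hm' : (0:ℝ) < m := by exact_mod_cast hm
  have h := bernstein.variance hm.ne' (⟨y, hy⟩ : unitInterval)
  rw [← Fin.sum_univ_eq_sum_range (fun k => (y - k/m)^2 * bpoly m k y)]
  rw [← h]
  apply Finset.sum_congr rfl
  intro k _
  simp [bpoly, bernstein_apply, bernstein.z]


lemma choose_aux2 (m k : ℕ) :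
    (k+1) * (m+1).choose (k+1) = (m+1) * m.choose k := by
  rw [mul_comm, ← Nat.add_one_mul_choose_eq]

lemma choose_aux1 (m k : ℕ) (hk : k ≤ m) :
    (m + 1 - k) * (m+1).choose k = (m+1) * m.choose k := by
  have h1 : (m+1).choose k = (m+1).choose (m+1-k) := (Nat.choose_symm (by omega)).symm
  have h2 : m + 1 - k = (m - k) + 1 := by omega
  have h3 : m.choose (m - k) = m.choose k := Nat.choose_symm hk
  rw [h1, h2, choose_aux2 m (m-k), h3]

lemma hasDerivAt_term (a : ℝ) (k j : ℕ) (x : ℝ) :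
    HasDerivAt (fun y : ℝ => a * y ^ k * (1 - y) ^ j)
      (a * ((k:ℝ) * x^(k-1) * (1-x)^j - (j:ℝ) * x^k * (1-x)^(j-1))) x := by
  have hs : HasDerivAt (fun y : ℝ => 1 - y) (-1) x := (hasDerivAt_id x).const_sub 1
  have h2 : HasDerivAt (fun y : ℝ => (1 - y) ^ j) (((j:ℝ) * (1-x)^(j-1)) * (-1)) x :=
    (hasDerivAt_pow j (1-x)).comp x hs
  have h1 : HasDerivAt (fun y : ℝ => a * y ^ k) (a * ((k:ℝ) * x^(k-1))) x :=
    (hasDerivAt_pow k x).const_mul a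
  have : HasDerivAt (fun y : ℝ => a * y ^ k * (1 - y) ^ j) _ x := h1.mul h2
  convert this using 1
  ring

lemma hasDerivAt_bsum (c : ℕ → ℝ) (m : ℕ) (x : ℝ) :
    HasDerivAt (fun y => ∑ k ∈ Finset.range (m+2), c k * bpoly (m+1) k y)
      ((m+1 : ℝ) * ∑ k ∈ Finset.range (m+1), (c (k+1) - c k) * bpoly m k x) x := by
  have term : ∀ k ∈ Finset.range (m+2), HasDerivAt (fun y => c k * bpoly (m+1) k y)
      ((c k * ((m+1).choose k : ℝ)) * ((k:ℝ) * x^(k-1) * (1-x)^(m+1-k)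
        - ((m+1-k : ℕ) : ℝ) * x^k * (1-x)^(m-k))) x := by
    intro k _
    have h := hasDerivAt_term (c k * ((m+1).choose k : ℝ)) k (m+1-k) x
    have hj : m + 1 - k - 1 = m - k := by omega
    rw [hj] at h
    have hfun : (fun y => c k * bpoly (m+1) k y)
        = (fun y : ℝ => (c k * ((m+1).choose k : ℝ)) * y^k * (1-y)^(m+1-k)) := by
      funext y; unfold bpoly; ring
    rw [hfun]; exact h
  have H : HasDerivAt (fun y => ∑ k ∈ Finset.range (m+2), c k * bpoly (m+1) k y) _ x :=
    HasDerivAt.fun_sum term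
  convert H using 1
  have split : ∀ k, (c k * ((m+1).choose k : ℝ)) * ((k:ℝ) * x^(k-1) * (1-x)^(m+1-k)
        - ((m+1-k : ℕ) : ℝ) * x^k * (1-x)^(m-k))
      = (c k * ((m+1).choose k : ℝ) * ((k:ℝ) * x^(k-1) * (1-x)^(m+1-k)))
        - (c k * (((m+1-k : ℕ) : ℝ) * ((m+1).choose k : ℝ)) * (x^k * (1-x)^(m-k))) := by
    intro k; ring
  rw [Finset.sum_congr rfl (fun k _ => split k), Finset.sum_sub_distrib]
  have hA : ∑ k ∈ Finset.range (m+2),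
      (c k * ((m+1).choose k : ℝ) * ((k:ℝ) * x^(k-1) * (1-x)^(m+1-k)))
      = ∑ k ∈ Finset.range (m+1), (m+1:ℝ) * (c (k+1) * bpoly m k x) := by
    rw [Finset.sum_range_succ']
    have h0 : c 0 * ((m+1).choose 0 : ℝ) * (((0:ℕ):ℝ) * x^(0-1) * (1-x)^(m+1-0)) = 0 := by
      norm_num
    rw [h0, add_zero]
    apply Finset.sum_congr rfl
    intro k _
    have key : ((k:ℝ)+1) * ((m+1).choose (k+1) : ℝ) = ((m:ℝ)+1) * (m.choose k : ℝ) := by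
      exact_mod_cast choose_aux2 m k
    have e1 : k + 1 - 1 = k := by omega
    have e2 : m + 1 - (k+1) = m - k := by omega
    rw [e1, e2]
    unfold bpoly
    push_cast
    linear_combination (c (k+1) * x^k * (1-x)^(m-k)) * key
  have hB : ∑ k ∈ Finset.range (m+2),
      (c k * (((m+1-k : ℕ) : ℝ) * ((m+1).choose k : ℝ)) * (x^k * (1-x)^(m-k)))
      = ∑ k ∈ Finset.range (m+1), (m+1:ℝ) * (c k * bpoly m k x) := by
    rw [Finset.sum_range_succ]
    have h0 : c (m+1) * (((m+1-(m+1) : ℕ) : ℝ) * ((m+1).choose (m+1) : ℝ))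
        * (x^(m+1) * (1-x)^(m-(m+1))) = 0 := by
      simp
    rw [h0, add_zero]
    apply Finset.sum_congr rfl
    intro k hk
    have hkm : k ≤ m := by simpa [Nat.lt_succ_iff] using Finset.mem_range.mp hk
    have key : (((m+1-k : ℕ)):ℝ) * ((m+1).choose k : ℝ) = ((m:ℝ)+1) * (m.choose k : ℝ) := by
      exact_mod_cast choose_aux1 m k hkm
    unfold bpoly
    linear_combination (c k * x^k * (1-x)^(m-k)) * key
  rw [hA, hB, ← Finset.sum_sub_distrib, Finset.mul_sum]
  apply Finset.sum_congr rfl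
  intro k _
  ring

lemma deriv_inner (f : ℝ → ℝ → ℝ) (m : ℕ) (s x₂ : ℝ) :
    deriv (fun t => bernstein2d f (m+1) s t) x₂
      = ((m:ℝ)+1) * ∑ k₂ ∈ Finset.range (m+1),
          ((∑ k₁ ∈ Finset.range (m+2),
              f ((k₁:ℝ)/((m:ℝ)+1)) (((k₂:ℝ)+1)/((m:ℝ)+1)) * bpoly (m+1) k₁ s)
           - ∑ k₁ ∈ Finset.range (m+2),
              f ((k₁:ℝ)/((m:ℝ)+1)) ((k₂:ℝ)/((m:ℝ)+1)) * bpoly (m+1) k₁ s)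
          * bpoly m k₂ x₂ := by
  set c : ℕ → ℝ := fun k₂ => ∑ k₁ ∈ Finset.range (m+2),
      f ((k₁:ℝ)/((m:ℝ)+1)) ((k₂:ℝ)/((m:ℝ)+1)) * bpoly (m+1) k₁ s with hc
  have hfun : (fun t => bernstein2d f (m+1) s t)
      = (fun t => ∑ k₂ ∈ Finset.range (m+2), c k₂ * bpoly (m+1) k₂ t) := by
    funext t
    unfold bernstein2d
    rw [Finset.sum_comm]
    apply Finset.sum_congr rfl
    intro k₂ _
    rw [hc, Finset.sum_mul]
    apply Finset.sum_congr rfl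
    intro k₁ _
    unfold bpoly
    push_cast
    ring
  rw [hfun, (hasDerivAt_bsum c m x₂).deriv]
  congr 1
  apply Finset.sum_congr rfl
  intro k₂ _
  simp only [hc]
  push_cast
  ring

lemma mixed_deriv_formula (f : ℝ → ℝ → ℝ) (m : ℕ) (x₁ x₂ : ℝ) :
    deriv (fun s => deriv (fun t => bernstein2d f (m+1) s t) x₂) x₁
    = ∑ k₁ ∈ Finset.range (m+1), ∑ k₂ ∈ Finset.range (m+1),
        (((m:ℝ)+1)^2 * f (((k₁:ℝ)+1)/((m:ℝ)+1)) (((k₂:ℝ)+1)/((m:ℝ)+1))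
          - ((m:ℝ)+1)^2 * f (((k₁:ℝ)+1)/((m:ℝ)+1)) ((k₂:ℝ)/((m:ℝ)+1))
          - ((m:ℝ)+1)^2 * f ((k₁:ℝ)/((m:ℝ)+1)) (((k₂:ℝ)+1)/((m:ℝ)+1))
          + ((m:ℝ)+1)^2 * f ((k₁:ℝ)/((m:ℝ)+1)) ((k₂:ℝ)/((m:ℝ)+1)))
        * (bpoly m k₁ x₁ * bpoly m k₂ x₂) := by
  set d : ℕ → ℝ := fun k₁ => ((m:ℝ)+1) * ∑ k₂ ∈ Finset.range (m+1),
      (f ((k₁:ℝ)/((m:ℝ)+1)) (((k₂:ℝ)+1)/((m:ℝ)+1))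
        - f ((k₁:ℝ)/((m:ℝ)+1)) ((k₂:ℝ)/((m:ℝ)+1))) * bpoly m k₂ x₂ with hd
  have hfun : (fun s => deriv (fun t => bernstein2d f (m+1) s t) x₂)
      = (fun s => ∑ k₁ ∈ Finset.range (m+2), d k₁ * bpoly (m+1) k₁ s) := by
    funext s
    rw [deriv_inner f m s x₂, Finset.mul_sum]
    have step1 : ∀ k₂ : ℕ,
        ((m:ℝ)+1) * (((∑ k₁ ∈ Finset.range (m+2),
              f ((k₁:ℝ)/((m:ℝ)+1)) (((k₂:ℝ)+1)/((m:ℝ)+1)) * bpoly (m+1) k₁ s)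
          - ∑ k₁ ∈ Finset.range (m+2),
              f ((k₁:ℝ)/((m:ℝ)+1)) ((k₂:ℝ)/((m:ℝ)+1)) * bpoly (m+1) k₁ s) * bpoly m k₂ x₂)
        = ∑ k₁ ∈ Finset.range (m+2),
            (((m:ℝ)+1) * ((f ((k₁:ℝ)/((m:ℝ)+1)) (((k₂:ℝ)+1)/((m:ℝ)+1))
              - f ((k₁:ℝ)/((m:ℝ)+1)) ((k₂:ℝ)/((m:ℝ)+1))) * bpoly m k₂ x₂)) * bpoly (m+1) k₁ s := by
      intro k₂
      rw [← Finset.sum_sub_distrib, Finset.sum_mul, Finset.mul_sum]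
      apply Finset.sum_congr rfl
      intro k₁ _
      ring
    rw [Finset.sum_congr rfl (fun k₂ _ => step1 k₂), Finset.sum_comm]
    apply Finset.sum_congr rfl
    intro k₁ _
    simp only [hd]
    rw [Finset.mul_sum, Finset.sum_mul]
  rw [hfun, (hasDerivAt_bsum d m x₁).deriv]
  rw [Finset.mul_sum]
  apply Finset.sum_congr rfl
  intro k₁ _
  simp only [hd]
  rw [← mul_sub, ← Finset.sum_sub_distrib, Finset.mul_sum, Finset.sum_mul, Finset.mul_sum]
  apply Finset.sum_congr rfl
  intro k₂ _
  push_cast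
  ring

lemma mvt_box (f f₂ f₁₂ : ℝ → ℝ → ℝ)
    (hd2 : ∀ x₁ x₂ : ℝ, HasDerivAt (fun t => f x₁ t) (f₂ x₁ x₂) x₂)
    (hd12 : ∀ x₁ x₂ : ℝ, HasDerivAt (fun t => f₂ t x₂) (f₁₂ x₁ x₂) x₁)
    (a₁ a₂ h : ℝ) (hh : 0 < h) :
    ∃ ξ ∈ Icc a₁ (a₁+h), ∃ η ∈ Icc a₂ (a₂+h),
      f (a₁+h) (a₂+h) - f (a₁+h) a₂ - f a₁ (a₂+h) + f a₁ a₂ = h^2 * f₁₂ ξ η := by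
  have hlt2 : a₂ < a₂ + h := by linarith
  have hlt1 : a₁ < a₁ + h := by linarith
  have Hc : ContinuousOn (fun t => f (a₁+h) t - f a₁ t) (Icc a₂ (a₂+h)) := by
    apply Continuous.continuousOn
    apply Continuous.sub
    · exact continuous_iff_continuousAt.mpr (fun t => (hd2 (a₁+h) t).continuousAt)
    · exact continuous_iff_continuousAt.mpr (fun t => (hd2 a₁ t).continuousAt)
  obtain ⟨η, hη, heq⟩ := exists_hasDerivAt_eq_slope (fun t => f (a₁+h) t - f a₁ t)
    (fun t => f₂ (a₁+h) t - f₂ a₁ t) hlt2 Hc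
    (fun t _ => (hd2 (a₁+h) t).sub (hd2 a₁ t))
  have Gc : ContinuousOn (fun s => f₂ s η) (Icc a₁ (a₁+h)) :=
    Continuous.continuousOn (continuous_iff_continuousAt.mpr (fun s => (hd12 s η).continuousAt))
  obtain ⟨ξ, hξ, heq2⟩ := exists_hasDerivAt_eq_slope (fun s => f₂ s η) (fun s => f₁₂ s η)
    hlt1 Gc (fun s _ => hd12 s η)
  refine ⟨ξ, Ioo_subset_Icc_self hξ, η, Ioo_subset_Icc_self hη, ?_⟩
  have hne : h ≠ 0 := ne_of_gt hh
  simp only [add_sub_cancel_left] at heq heq2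
  field_simp at heq heq2
  nlinarith [heq, heq2]

lemma sum_A_bound (m : ℕ) (hm : 1 ≤ m) {x : ℝ} (hx : x ∈ Icc (0:ℝ) 1) :
    ∑ k ∈ Finset.range (m+1), (2/((m:ℝ)+1)^2 + 2*((k:ℝ)/m - x)^2) * bpoly m k x
      ≤ 2/((m:ℝ)+1)^2 + 1/(2*m) := by
  have hm0 : (0:ℝ) < m := by exact_mod_cast hm
  have hsplit : ∀ k ∈ Finset.range (m+1),
      (2/((m:ℝ)+1)^2 + 2*((k:ℝ)/m - x)^2) * bpoly m k x
      = 2/((m:ℝ)+1)^2 * bpoly m k x + 2*((x - (k:ℝ)/m)^2 * bpoly m k x) := by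
    intro k _; ring
  rw [Finset.sum_congr rfl hsplit, Finset.sum_add_distrib, ← Finset.mul_sum, ← Finset.mul_sum,
    bpoly_sum m hx, bpoly_variance m hm hx, mul_one]
  obtain ⟨hx0, hx1⟩ := hx
  have hxx : x*(1-x) ≤ 1/4 := by nlinarith [sq_nonneg (x - 1/2)]
  have key : 2 * (x*(1-x)/m) ≤ 1/(2*m) := by
    have h2 : (0:ℝ) < 2*m := by positivity
    rw [show (2:ℝ)*(x*(1-x)/m) = (2*(x*(1-x)))/m by ring,
      div_le_div_iff₀ hm0 h2]
    nlinarith [mul_le_mul_of_nonneg_right hxx (le_of_lt hm0)]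
  linarith

lemma double_sum_bound (m : ℕ) (hm : 1 ≤ m) (c e : ℝ) (hc : 0 ≤ c) (he : 0 ≤ e)
    {x₁ x₂ : ℝ} (hx₁ : x₁ ∈ Icc (0:ℝ) 1) (hx₂ : x₂ ∈ Icc (0:ℝ) 1)
    (T : ℕ → ℕ → ℝ)
    (hT : ∀ k₁ ∈ Finset.range (m+1), ∀ k₂ ∈ Finset.range (m+1),
      |T k₁ k₂| ≤ e + c * ((2/((m:ℝ)+1)^2 + 2*((k₁:ℝ)/m - x₁)^2)
                         + (2/((m:ℝ)+1)^2 + 2*((k₂:ℝ)/m - x₂)^2))) :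
    |∑ k₁ ∈ Finset.range (m+1), ∑ k₂ ∈ Finset.range (m+1),
        T k₁ k₂ * (bpoly m k₁ x₁ * bpoly m k₂ x₂)|
      ≤ e + c * (4/((m:ℝ)+1)^2 + 1/m) := by
  have hu : ∀ k : ℕ, 0 ≤ bpoly m k x₁ := fun k => bpoly_nonneg hx₁.1 hx₁.2
  have hv : ∀ k : ℕ, 0 ≤ bpoly m k x₂ := fun k => bpoly_nonneg hx₂.1 hx₂.2
  set A : ℕ → ℝ := fun k => 2/((m:ℝ)+1)^2 + 2*((k:ℝ)/m - x₁)^2 with hA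
  set B : ℕ → ℝ := fun k => 2/((m:ℝ)+1)^2 + 2*((k:ℝ)/m - x₂)^2 with hB
  set SA : ℝ := ∑ k ∈ Finset.range (m+1), A k * bpoly m k x₁ with hSA
  set SB : ℝ := ∑ k ∈ Finset.range (m+1), B k * bpoly m k x₂ with hSB
  have hSAb : SA ≤ 2/((m:ℝ)+1)^2 + 1/(2*m) := sum_A_bound m hm hx₁
  have hSBb : SB ≤ 2/((m:ℝ)+1)^2 + 1/(2*m) := sum_A_bound m hm hx₂
  have hSB0 : 0 ≤ SB := Finset.sum_nonneg (fun k _ => mul_nonneg (by positivity) (hv k))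
  have hSA0 : 0 ≤ SA := Finset.sum_nonneg (fun k _ => mul_nonneg (by positivity) (hu k))
  have step1 : |∑ k₁ ∈ Finset.range (m+1), ∑ k₂ ∈ Finset.range (m+1),
        T k₁ k₂ * (bpoly m k₁ x₁ * bpoly m k₂ x₂)|
      ≤ ∑ k₁ ∈ Finset.range (m+1), ∑ k₂ ∈ Finset.range (m+1),
        (e + c * (A k₁ + B k₂)) * (bpoly m k₁ x₁ * bpoly m k₂ x₂) := by
    apply (Finset.abs_sum_le_sum_abs _ _).trans
    apply Finset.sum_le_sum
    intro k₁ hk₁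
    apply (Finset.abs_sum_le_sum_abs _ _).trans
    apply Finset.sum_le_sum
    intro k₂ hk₂
    rw [abs_mul, abs_of_nonneg (mul_nonneg (hu k₁) (hv k₂))]
    exact mul_le_mul_of_nonneg_right (hT k₁ hk₁ k₂ hk₂) (mul_nonneg (hu k₁) (hv k₂))
  have inner : ∀ k₁ ∈ Finset.range (m+1),
      ∑ k₂ ∈ Finset.range (m+1), (e + c * (A k₁ + B k₂)) * (bpoly m k₁ x₁ * bpoly m k₂ x₂)
      = ((e + c * A k₁) * bpoly m k₁ x₁) + (c * bpoly m k₁ x₁) * SB := by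
    intro k₁ _
    have expand : ∀ k₂ ∈ Finset.range (m+1),
        (e + c * (A k₁ + B k₂)) * (bpoly m k₁ x₁ * bpoly m k₂ x₂)
        = ((e + c * A k₁) * bpoly m k₁ x₁) * bpoly m k₂ x₂
          + (c * bpoly m k₁ x₁) * (B k₂ * bpoly m k₂ x₂) := by
      intro k₂ _; ring
    rw [Finset.sum_congr rfl expand, Finset.sum_add_distrib, ← Finset.mul_sum, ← Finset.mul_sum,
      bpoly_sum m hx₂, mul_one, ← hSB]
  have step2 : ∑ k₁ ∈ Finset.range (m+1), ∑ k₂ ∈ Finset.range (m+1),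
        (e + c * (A k₁ + B k₂)) * (bpoly m k₁ x₁ * bpoly m k₂ x₂)
      = e + c * SA + c * SB := by
    rw [Finset.sum_congr rfl inner, Finset.sum_add_distrib]
    have e1 : ∀ k₁ ∈ Finset.range (m+1),
        (e + c * A k₁) * bpoly m k₁ x₁ = e * bpoly m k₁ x₁ + c * (A k₁ * bpoly m k₁ x₁) := by
      intro k₁ _; ring
    have e2 : ∀ k₁ ∈ Finset.range (m+1),
        (c * bpoly m k₁ x₁) * SB = (c * SB) * bpoly m k₁ x₁ := by
      intro k₁ _; ring
    rw [Finset.sum_congr rfl e1, Finset.sum_congr rfl e2, Finset.sum_add_distrib,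
      ← Finset.mul_sum, ← Finset.mul_sum, ← Finset.mul_sum, bpoly_sum m hx₁, mul_one, mul_one, ← hSA]
  have := step1.trans_eq step2
  refine this.trans ?_
  have h1 : c * SA ≤ c * (2/((m:ℝ)+1)^2 + 1/(2*m)) := mul_le_mul_of_nonneg_left hSAb hc
  have h2 : c * SB ≤ c * (2/((m:ℝ)+1)^2 + 1/(2*m)) := mul_le_mul_of_nonneg_left hSBb hc
  have hm0 : (0:ℝ) < m := by exact_mod_cast hm
  have : c * (2/((m:ℝ)+1)^2 + 1/(2*m)) + c * (2/((m:ℝ)+1)^2 + 1/(2*m))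
      = c * (4/((m:ℝ)+1)^2 + 1/m) := by
    field_simp
    ring
  linarith

lemma node_dist (m k : ℕ) (hm : 1 ≤ m) (hk : k ≤ m) {ξ : ℝ}
    (hξ : ξ ∈ Icc ((k:ℝ)/((m:ℝ)+1)) (((k:ℝ)+1)/((m:ℝ)+1))) :
    (ξ - (k:ℝ)/m)^2 ≤ 1/((m:ℝ)+1)^2 := by
  have hm0 : (0:ℝ) < m := by exact_mod_cast hm
  have hn0 : (0:ℝ) < (m:ℝ)+1 := by linarith
  obtain ⟨h1, h2⟩ := hξ
  have hk' : (k:ℝ) ≤ m := by exact_mod_cast hk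
  have e1 : (k:ℝ)/m - 1/((m:ℝ)+1) ≤ (k:ℝ)/((m:ℝ)+1) := by
    rw [div_sub_div _ _ (ne_of_gt hm0) (ne_of_gt hn0), div_le_div_iff₀ (by positivity) hn0]
    nlinarith
  have e2 : ((k:ℝ)+1)/((m:ℝ)+1) ≤ (k:ℝ)/m + 1/((m:ℝ)+1) := by
    rw [div_add_div _ _ (ne_of_gt hm0) (ne_of_gt hn0), div_le_div_iff₀ hn0 (by positivity)]
    nlinarith
  have hlow : -(1/((m:ℝ)+1)) ≤ ξ - (k:ℝ)/m := by linarith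
  have hup : ξ - (k:ℝ)/m ≤ 1/((m:ℝ)+1) := by linarith
  calc (ξ - (k:ℝ)/m)^2 ≤ (1/((m:ℝ)+1))^2 := sq_le_sq' hlow hup
  _ = 1/((m:ℝ)+1)^2 := by rw [div_pow, one_pow]

lemma xi_mem (m k : ℕ) (hk : k ≤ m) {ξ : ℝ}
    (hξ : ξ ∈ Icc ((k:ℝ)/((m:ℝ)+1)) (((k:ℝ)+1)/((m:ℝ)+1))) :
    ξ ∈ Icc (0:ℝ) 1 := by
  obtain ⟨h1, h2⟩ := hξ
  have hn0 : (0:ℝ) < (m:ℝ)+1 := by positivity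
  have hk' : (k:ℝ) ≤ m := by exact_mod_cast hk
  constructor
  · have : (0:ℝ) ≤ (k:ℝ)/((m:ℝ)+1) := by positivity
    linarith
  · have : ((k:ℝ)+1)/((m:ℝ)+1) ≤ 1 := by
      rw [div_le_one hn0]; linarith
    linarith

set_option maxHeartbeats 1000000 in
/-- If `f : ℝ² → ℝ` is continuous and has an (everywhere existing) continuous mixed partial
derivative `f₁₂ = ∂/∂x₁(∂f/∂x₂)` on `ℝ²`, then the mixed derivatives
`∂²Bₙ(f,·,·)/∂x₁∂x₂` of the two-variable Bernstein polynomials converge to `f₁₂`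
uniformly on `[0,1]²` as `n → ∞`. -/
theorem bernstein2d_mixed_deriv_tendstoUniformlyOn (f f₂ f₁₂ : ℝ → ℝ → ℝ)
    (hf : Continuous (Function.uncurry f))
    (hd2 : ∀ x₁ x₂ : ℝ, HasDerivAt (fun t => f x₁ t) (f₂ x₁ x₂) x₂)
    (hd12 : ∀ x₁ x₂ : ℝ, HasDerivAt (fun t => f₂ t x₂) (f₁₂ x₁ x₂) x₁)
    (hcont : Continuous (Function.uncurry f₁₂)) :
    TendstoUniformlyOn
      (fun n (p : ℝ × ℝ) =>
        deriv (fun s => deriv (fun t => bernstein2d f n s t) p.2) p.1)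
      (fun p => f₁₂ p.1 p.2) atTop (Set.Icc (0 : ℝ) 1 ×ˢ Set.Icc (0 : ℝ) 1) := by
  classical
  have hKc : IsCompact (Icc (0:ℝ) 1 ×ˢ Icc (0:ℝ) 1) := isCompact_Icc.prod isCompact_Icc
  rw [Metric.tendstoUniformlyOn_iff]
  intro ε hε
  obtain ⟨C, hC⟩ := hKc.exists_bound_of_continuousOn hcont.continuousOn
  set M : ℝ := max C 1 with hMdef
  have hM1 : (1:ℝ) ≤ M := le_max_right _ _
  have hM0 : (0:ℝ) < M := lt_of_lt_of_le one_pos hM1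
  have hMb : ∀ u ∈ Icc (0:ℝ) 1 ×ˢ Icc (0:ℝ) 1, |f₁₂ u.1 u.2| ≤ M := by
    intro u hu
    calc |f₁₂ u.1 u.2| = ‖Function.uncurry f₁₂ u‖ := (Real.norm_eq_abs _).symm
      _ ≤ C := hC u hu
      _ ≤ M := le_max_left _ _
  have hUC : UniformContinuousOn (Function.uncurry f₁₂) (Icc (0:ℝ) 1 ×ˢ Icc (0:ℝ) 1) :=
    hKc.uniformContinuousOn_of_continuous hcont.continuousOn
  obtain ⟨δ, hδ0, hδ⟩ := (Metric.uniformContinuousOn_iff).mp hUC (ε/2) (half_pos hε)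
  set c : ℝ := 2*M/δ^2 with hcdef
  have hc0 : (0:ℝ) ≤ c := by positivity
  -- key pointwise inequality
  have key : ∀ u v : ℝ × ℝ, u ∈ Icc (0:ℝ) 1 ×ˢ Icc (0:ℝ) 1 →
      v ∈ Icc (0:ℝ) 1 ×ˢ Icc (0:ℝ) 1 →
      |f₁₂ u.1 u.2 - f₁₂ v.1 v.2| ≤ ε/2 + c * ((u.1-v.1)^2 + (u.2-v.2)^2) := by
    intro u v hu hv
    have hterm : 0 ≤ c * ((u.1-v.1)^2 + (u.2-v.2)^2) := by positivity
    by_cases hdist : dist u v < δ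
    · have h := hδ u hu v hv hdist
      simp only [Function.uncurry, Real.dist_eq] at h
      linarith [le_of_lt h]
    · push_neg at hdist
      have hmax : δ ≤ max |u.1 - v.1| |u.2 - v.2| := by
        rw [Prod.dist_eq, Real.dist_eq, Real.dist_eq] at hdist; exact hdist
      have hsq : δ^2 ≤ (u.1-v.1)^2 + (u.2-v.2)^2 := by
        rcases le_max_iff.mp hmax with h | h
        · nlinarith [sq_nonneg (u.2-v.2), sq_abs (u.1-v.1), abs_nonneg (u.1-v.1)]
        · nlinarith [sq_nonneg (u.1-v.1), sq_abs (u.2-v.2), abs_nonneg (u.2-v.2)]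
      have hb1 := hMb u hu
      have hb2 := hMb v hv
      have h2M : 2*M ≤ c * ((u.1-v.1)^2 + (u.2-v.2)^2) := by
        rw [hcdef, div_mul_eq_mul_div, le_div_iff₀ (by positivity)]
        nlinarith
      have habs : |f₁₂ u.1 u.2 - f₁₂ v.1 v.2| ≤ |f₁₂ u.1 u.2| + |f₁₂ v.1 v.2| :=
        abs_sub _ _
      linarith
  -- the main estimate for each m ≥ 1
  have est : ∀ m : ℕ, 1 ≤ m → ∀ p : ℝ × ℝ, p ∈ Icc (0:ℝ) 1 ×ˢ Icc (0:ℝ) 1 →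
      dist (f₁₂ p.1 p.2)
        (deriv (fun s => deriv (fun t => bernstein2d f (m+1) s t) p.2) p.1)
      ≤ ε/2 + c * (4/((m:ℝ)+1)^2 + 1/m) := by
    intro m hm p hp
    obtain ⟨x₁, x₂⟩ := p
    obtain ⟨hx₁, hx₂⟩ := hp
    have hm0 : (0:ℝ) < m := by exact_mod_cast hm
    have hn0 : (0:ℝ) < (m:ℝ)+1 := by positivity
    have mvt : ∀ k₁ k₂ : ℕ, ∃ ξ, (ξ ∈ Icc ((k₁:ℝ)/((m:ℝ)+1)) (((k₁:ℝ)+1)/((m:ℝ)+1))) ∧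
        ∃ η, (η ∈ Icc ((k₂:ℝ)/((m:ℝ)+1)) (((k₂:ℝ)+1)/((m:ℝ)+1))) ∧
        (((m:ℝ)+1)^2 * f (((k₁:ℝ)+1)/((m:ℝ)+1)) (((k₂:ℝ)+1)/((m:ℝ)+1))
          - ((m:ℝ)+1)^2 * f (((k₁:ℝ)+1)/((m:ℝ)+1)) ((k₂:ℝ)/((m:ℝ)+1))
          - ((m:ℝ)+1)^2 * f ((k₁:ℝ)/((m:ℝ)+1)) (((k₂:ℝ)+1)/((m:ℝ)+1))
          + ((m:ℝ)+1)^2 * f ((k₁:ℝ)/((m:ℝ)+1)) ((k₂:ℝ)/((m:ℝ)+1))) = f₁₂ ξ η := by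
      intro k₁ k₂
      obtain ⟨ξ, hξ, η, hη, heq⟩ := mvt_box f f₂ f₁₂ hd2 hd12
        ((k₁:ℝ)/((m:ℝ)+1)) ((k₂:ℝ)/((m:ℝ)+1)) (1/((m:ℝ)+1)) (by positivity)
      have harg1 : (k₁:ℝ)/((m:ℝ)+1) + 1/((m:ℝ)+1) = ((k₁:ℝ)+1)/((m:ℝ)+1) := by
        rw [← add_div]
      have harg2 : (k₂:ℝ)/((m:ℝ)+1) + 1/((m:ℝ)+1) = ((k₂:ℝ)+1)/((m:ℝ)+1) := by
        rw [← add_div]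
      rw [harg1] at hξ heq
      rw [harg2] at hη heq
      refine ⟨ξ, hξ, η, hη, ?_⟩
      have h2 : ((1:ℝ)/((m:ℝ)+1))^2 * ((m:ℝ)+1)^2 = 1 := by
        field_simp
      calc ((m:ℝ)+1)^2 * f (((k₁:ℝ)+1)/((m:ℝ)+1)) (((k₂:ℝ)+1)/((m:ℝ)+1))
          - ((m:ℝ)+1)^2 * f (((k₁:ℝ)+1)/((m:ℝ)+1)) ((k₂:ℝ)/((m:ℝ)+1))
          - ((m:ℝ)+1)^2 * f ((k₁:ℝ)/((m:ℝ)+1)) (((k₂:ℝ)+1)/((m:ℝ)+1))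
          + ((m:ℝ)+1)^2 * f ((k₁:ℝ)/((m:ℝ)+1)) ((k₂:ℝ)/((m:ℝ)+1))
          = ((m:ℝ)+1)^2 * (f (((k₁:ℝ)+1)/((m:ℝ)+1)) (((k₂:ℝ)+1)/((m:ℝ)+1))
            - f (((k₁:ℝ)+1)/((m:ℝ)+1)) ((k₂:ℝ)/((m:ℝ)+1))
            - f ((k₁:ℝ)/((m:ℝ)+1)) (((k₂:ℝ)+1)/((m:ℝ)+1))
            + f ((k₁:ℝ)/((m:ℝ)+1)) ((k₂:ℝ)/((m:ℝ)+1))) := by ring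
        _ = ((m:ℝ)+1)^2 * ((1/((m:ℝ)+1))^2 * f₁₂ ξ η) := by rw [heq]
        _ = f₁₂ ξ η := by rw [← mul_assoc, mul_comm (((m:ℝ)+1)^2), h2, one_mul]
    choose ξ hξ η hη hval using mvt
    rw [Real.dist_eq, mixed_deriv_formula]
    have hrw : ∀ k₁ ∈ Finset.range (m+1), ∀ k₂ ∈ Finset.range (m+1),
        (((m:ℝ)+1)^2 * f (((k₁:ℝ)+1)/((m:ℝ)+1)) (((k₂:ℝ)+1)/((m:ℝ)+1))
          - ((m:ℝ)+1)^2 * f (((k₁:ℝ)+1)/((m:ℝ)+1)) ((k₂:ℝ)/((m:ℝ)+1))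
          - ((m:ℝ)+1)^2 * f ((k₁:ℝ)/((m:ℝ)+1)) (((k₂:ℝ)+1)/((m:ℝ)+1))
          + ((m:ℝ)+1)^2 * f ((k₁:ℝ)/((m:ℝ)+1)) ((k₂:ℝ)/((m:ℝ)+1)))
        * (bpoly m k₁ x₁ * bpoly m k₂ x₂)
        = f₁₂ (ξ k₁ k₂) (η k₁ k₂) * (bpoly m k₁ x₁ * bpoly m k₂ x₂) := by
      intro k₁ _ k₂ _
      rw [hval k₁ k₂]
    rw [Finset.sum_congr rfl (fun k₁ hk₁ => Finset.sum_congr rfl (fun k₂ hk₂ => hrw k₁ hk₁ k₂ hk₂))]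
    have hone : ∑ k₁ ∈ Finset.range (m+1), ∑ k₂ ∈ Finset.range (m+1),
        bpoly m k₁ x₁ * bpoly m k₂ x₂ = 1 := by
      rw [← Finset.sum_mul_sum, bpoly_sum m hx₁, bpoly_sum m hx₂, mul_one]
    have hexp : f₁₂ x₁ x₂ - ∑ k₁ ∈ Finset.range (m+1), ∑ k₂ ∈ Finset.range (m+1),
          f₁₂ (ξ k₁ k₂) (η k₁ k₂) * (bpoly m k₁ x₁ * bpoly m k₂ x₂)
        = ∑ k₁ ∈ Finset.range (m+1), ∑ k₂ ∈ Finset.range (m+1),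
          (f₁₂ x₁ x₂ - f₁₂ (ξ k₁ k₂) (η k₁ k₂)) * (bpoly m k₁ x₁ * bpoly m k₂ x₂) := by
      have hpull : ∑ k₁ ∈ Finset.range (m+1), ∑ k₂ ∈ Finset.range (m+1),
          f₁₂ x₁ x₂ * (bpoly m k₁ x₁ * bpoly m k₂ x₂)
          = f₁₂ x₁ x₂ * ∑ k₁ ∈ Finset.range (m+1), ∑ k₂ ∈ Finset.range (m+1),
            (bpoly m k₁ x₁ * bpoly m k₂ x₂) := by
        rw [Finset.mul_sum]
        exact Finset.sum_congr rfl (fun k₁ _ => by rw [Finset.mul_sum])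
      simp only [sub_mul, Finset.sum_sub_distrib]
      rw [hpull, hone, mul_one]
    rw [hexp]
    -- apply the master bound
    apply double_sum_bound m hm c (ε/2) hc0 (le_of_lt (half_pos hε)) hx₁ hx₂
    intro k₁ hk₁ k₂ hk₂
    have hk₁m : k₁ ≤ m := Nat.lt_succ_iff.mp (Finset.mem_range.mp hk₁)
    have hk₂m : k₂ ≤ m := Nat.lt_succ_iff.mp (Finset.mem_range.mp hk₂)
    have hξK : ξ k₁ k₂ ∈ Icc (0:ℝ) 1 := xi_mem m k₁ hk₁m (hξ k₁ k₂)
    have hηK : η k₁ k₂ ∈ Icc (0:ℝ) 1 := xi_mem m k₂ hk₂m (hη k₁ k₂)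
    have hkey := key (x₁, x₂) (ξ k₁ k₂, η k₁ k₂) ⟨hx₁, hx₂⟩ ⟨hξK, hηK⟩
    simp only at hkey
    have hnd1 := node_dist m k₁ hm hk₁m (hξ k₁ k₂)
    have hnd2 := node_dist m k₂ hm hk₂m (hη k₁ k₂)
    have h2e : 2/((m:ℝ)+1)^2 = 2*(1/((m:ℝ)+1)^2) := by ring
    have hb1 : (x₁ - ξ k₁ k₂)^2 ≤ 2/((m:ℝ)+1)^2 + 2*((k₁:ℝ)/m - x₁)^2 := by
      nlinarith [sq_nonneg (x₁ - 2*((k₁:ℝ)/m) + ξ k₁ k₂), hnd1, h2e]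
    have hb2 : (x₂ - η k₁ k₂)^2 ≤ 2/((m:ℝ)+1)^2 + 2*((k₂:ℝ)/m - x₂)^2 := by
      nlinarith [sq_nonneg (x₂ - 2*((k₂:ℝ)/m) + η k₁ k₂), hnd2, h2e]
    have hmono : c * ((x₁ - ξ k₁ k₂)^2 + (x₂ - η k₁ k₂)^2)
        ≤ c * ((2/((m:ℝ)+1)^2 + 2*((k₁:ℝ)/m - x₁)^2) + (2/((m:ℝ)+1)^2 + 2*((k₂:ℝ)/m - x₂)^2)) :=
      mul_le_mul_of_nonneg_left (by linarith) hc0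
    linarith [hkey]
  -- conclude
  obtain ⟨N₀, hN₀⟩ := exists_nat_gt (max 1 (20*M/(δ^2*ε)))
  filter_upwards [eventually_ge_atTop (N₀+1)] with n hn
  intro p hp
  obtain ⟨m, rfl⟩ : ∃ m, n = m+1 := ⟨n-1, by omega⟩
  have hN₀1 : (1:ℝ) < N₀ := lt_of_le_of_lt (le_max_left _ _) hN₀
  have hN₀1' : 1 ≤ N₀ := by exact_mod_cast hN₀1.le
  have hmN : N₀ ≤ m := by omega
  have hm1 : 1 ≤ m := le_trans hN₀1' hmN
  have hm0 : (0:ℝ) < m := by exact_mod_cast hm1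
  refine lt_of_le_of_lt (est m hm1 p hp) ?_
  have hmR : (20*M/(δ^2*ε)) < (m:ℝ) := by
    calc 20*M/(δ^2*ε) ≤ max 1 (20*M/(δ^2*ε)) := le_max_right _ _
      _ < N₀ := hN₀
      _ ≤ m := by exact_mod_cast hmN
  have h4 : 4/((m:ℝ)+1)^2 ≤ 4/(m:ℝ) := by
    rw [div_le_div_iff₀ (by positivity) hm0]
    nlinarith
  have h5 : 4/(m:ℝ) + 1/(m:ℝ) = 5/(m:ℝ) := by ring
  have hc5 : c * (4/((m:ℝ)+1)^2 + 1/(m:ℝ)) ≤ c * (5/(m:ℝ)) :=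
    mul_le_mul_of_nonneg_left (by linarith) hc0
  have hfin : c * (5/(m:ℝ)) < ε/2 := by
    have h1 : (0:ℝ) < δ^2*ε := by positivity
    have h2 : 20*M < (m:ℝ)*(δ^2*ε) := (div_lt_iff₀ h1).mp hmR
    rw [hcdef, div_mul_div_comm, div_lt_iff₀ (by positivity)]
    nlinarith [h2]
  linarith
end
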